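/- arXiv:2107.10619 — 11 statements merged into one kernel-verified Lean document; each statement's English description precedes it below -/
import Mathlib

section
/- Let m ≥ 4, let G = (ℤ/mℤ)², let g ∈ G, and let S = f₁^[m−1] · ∏_{i=1}^{m} (x_i f₁ + f₂) ∈ Υ_u(G), where (f₁,f₂) is a basis of G and x₁,…,x_m ∈ [0,m−1]. If S' = f₁^[−2] · S · (f₁+g) · (f₁−g) ∈ Υ(G), then g = 0 and S' = S. -/
/-- `(e₁, e₂)` is a basis of the abelian group `G`, i.e. `G = ⟨e₁⟩ ⊕ ⟨e₂⟩`. -/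
def IsBasis {G : Type*} [AddCommGroup G] (e₁ e₂ : G) : Prop :=
  AddSubgroup.zmultiples e₁ ⊔ AddSubgroup.zmultiples e₂ = ⊤ ∧
    AddSubgroup.zmultiples e₁ ⊓ AddSubgroup.zmultiples e₂ = ⊥

/-- `Υ(G)` for `G = (ℤ/mℤ)²`: all sequences `e₁^[m-1] · ∏_{i=1}^m (xᵢe₁ + e₂)` for some
basis `(e₁, e₂)` and `x₁, …, x_m ∈ [0, m-1]` with `x₁ + ⋯ + x_m ≡ 1 (mod m)`. -/
def Upsilon (m : ℕ) : Set (Multiset (ZMod m × ZMod m)) :=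
  { S | ∃ (e₁ e₂ : ZMod m × ZMod m) (x : Fin m → ℕ),
      IsBasis e₁ e₂ ∧ (∀ i, x i ≤ m - 1) ∧ (∑ i, x i) % m = 1 % m ∧
      S = Multiset.replicate (m - 1) e₁ +
          Multiset.map (fun i => x i • e₁ + e₂) (Finset.univ : Finset (Fin m)).val }

/-- `Υ_u(G)`: members of `Υ(G)` with a unique term of multiplicity `m - 1`. -/
def UpsilonU (m : ℕ) : Set (Multiset (ZMod m × ZMod m)) :=
  { S | S ∈ Upsilon m ∧ ∃! g, S.count g = m - 1 }

/-- `Υ_nu(G)`: sequences `e₁^[m-1] · e₂^[m-1] · (e₁ + e₂)` for some basis `(e₁, e₂)`. -/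
def UpsilonNU (m : ℕ) : Set (Multiset (ZMod m × ZMod m)) :=
  { S | ∃ (e₁ e₂ : ZMod m × ZMod m), IsBasis e₁ e₂ ∧
      S = Multiset.replicate (m - 1) e₁ + Multiset.replicate (m - 1) e₂ + {e₁ + e₂} }

/-- auxiliary lemmas -/
lemma exists_basis_equiv {m : ℕ} [NeZero m] {e₁ e₂ : ZMod m × ZMod m} (h : IsBasis e₁ e₂) :
    ∃ ψ : (ZMod m × ZMod m) ≃+ (ZMod m × ZMod m),
      ∀ k l : ℤ, ψ ((k : ZMod m), (l : ZMod m)) = k • e₁ + l • e₂ := by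
  have hzero : ∀ z : ZMod m × ZMod m, (zmultiplesHom _ z) (m : ℤ) = 0 := by
    intro z
    show (m : ℤ) • z = 0
    rw [natCast_zsmul]
    ext <;> simp [ZMod.natCast_self]
  let φ₁ : ZMod m →+ ZMod m × ZMod m := ZMod.lift m ⟨zmultiplesHom _ e₁, hzero e₁⟩
  let φ₂ : ZMod m →+ ZMod m × ZMod m := ZMod.lift m ⟨zmultiplesHom _ e₂, hzero e₂⟩
  let ψ₀ : ZMod m × ZMod m →+ ZMod m × ZMod m := φ₁.coprod φ₂
  have hspec : ∀ k l : ℤ, ψ₀ ((k : ZMod m), (l : ZMod m)) = k • e₁ + l • e₂ := by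
    intro k l
    show φ₁ (k : ZMod m) + φ₂ (l : ZMod m) = _
    rw [ZMod.lift_coe, ZMod.lift_coe]
    rfl
  have hsurj : Function.Surjective ψ₀ := by
    intro z
    have hz : z ∈ AddSubgroup.zmultiples e₁ ⊔ AddSubgroup.zmultiples e₂ := by
      rw [h.1]; trivial
    rw [AddSubgroup.mem_sup] at hz
    obtain ⟨y₁, hy₁, y₂, hy₂, hyz⟩ := hz
    obtain ⟨k, hk⟩ := AddSubgroup.mem_zmultiples_iff.mp hy₁
    obtain ⟨l, hl⟩ := AddSubgroup.mem_zmultiples_iff.mp hy₂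
    exact ⟨((k : ZMod m), (l : ZMod m)), by rw [hspec, hk, hl, hyz]⟩
  have hinj : Function.Injective ψ₀ := Finite.injective_iff_surjective.mpr hsurj
  exact ⟨AddEquiv.ofBijective ψ₀ ⟨hinj, hsurj⟩, hspec⟩

lemma natCast_inj_of_lt {m : ℕ} {a b : ℕ} (ha : a < m) (hb : b < m)
    (h : (a : ZMod m) = b) : a = b := by
  have := (ZMod.natCast_eq_natCast_iff a b m).mp h
  rw [Nat.ModEq, Nat.mod_eq_of_lt ha, Nat.mod_eq_of_lt hb] at this
  exact this

lemma exists_pi {m : ℕ} [NeZero m] {e₁ e₂ : ZMod m × ZMod m} (h : IsBasis e₁ e₂) :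
    ∃ π : (ZMod m × ZMod m) →+ ZMod m, π e₁ = 0 ∧ π e₂ = 1 ∧
      ∀ a b : ℕ, a < m → b < m → a • e₁ = b • e₁ → a = b := by
  obtain ⟨ψ, hψ⟩ := exists_basis_equiv h
  have he₁ : ψ (1, 0) = e₁ := by simpa using hψ 1 0
  have he₂ : ψ (0, 1) = e₂ := by simpa using hψ 0 1
  refine ⟨(AddMonoidHom.snd _ _).comp ψ.symm.toAddMonoidHom, ?_, ?_, ?_⟩
  · simp [← he₁]
  · simp [← he₂]
  · intro a b ha hb hab
    have h1 : ψ ((a : ZMod m), 0) = a • e₁ := by simpa using hψ (a : ℤ) 0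
    have h2 : ψ ((b : ZMod m), 0) = b • e₁ := by simpa using hψ (b : ℤ) 0
    have := ψ.injective (h1.trans (hab.trans h2.symm))
    exact natCast_inj_of_lt ha hb (congrArg Prod.fst this)

lemma count_map_univ {n : ℕ} {α : Type*} [DecidableEq α] (f : Fin n → α) (b : α)
    (p : Fin n → Prop) [DecidablePred p] (hp : ∀ i, p i ↔ f i = b) :
    Multiset.count b (Multiset.map f (Finset.univ : Finset (Fin n)).val) =
      (Finset.filter p Finset.univ).card := by
  rw [Multiset.count_map]
  rw [Multiset.filter_congr (fun a _ => (eq_comm.trans (hp a).symm : b = f a ↔ p a))]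
  rfl

lemma count_repl_ne {α : Type*} [DecidableEq α] {a b : α} (n : ℕ) (h : a ≠ b) :
    Multiset.count a (Multiset.replicate n b) = 0 :=
  Multiset.count_eq_zero.mpr (fun hm => h (Multiset.eq_of_mem_replicate hm))

theorem stmt_0 (m : ℕ) (hm : 4 ≤ m) (g f₁ f₂ : ZMod m × ZMod m)
    (x : Fin m → ℕ) (hx : ∀ i, x i ≤ m - 1) (hbasis : IsBasis f₁ f₂)
    (S : Multiset (ZMod m × ZMod m))
    (hS : S = Multiset.replicate (m - 1) f₁ +
        Multiset.map (fun i => x i • f₁ + f₂) (Finset.univ : Finset (Fin m)).val)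
    (hSU : S ∈ UpsilonU m)
    (S' : Multiset (ZMod m × ZMod m))
    (hS' : S' = (S - Multiset.replicate 2 f₁) + {f₁ + g, f₁ - g})
    (hS'U : S' ∈ Upsilon m) :
    g = 0 ∧ S' = S := by
  classical
  haveI : NeZero m := ⟨by omega⟩
  haveI : Fact (1 < m) := ⟨by omega⟩
  have hone : (1 : ZMod m) ≠ 0 := one_ne_zero
  obtain ⟨e₁, e₂, y, hebasis, hy, hysum, hS'eq⟩ := hS'U
  obtain ⟨π, hπ1, hπ2, hπinj⟩ := exists_pi hebasis
  obtain ⟨ρ, hρ1, hρ2, hρinj⟩ := exists_pi hbasis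
  have hcardu : (Finset.univ : Finset (Fin m)).val.card = m := by
    rw [← Finset.card_def, Finset.card_univ, Fintype.card_fin]
  have hrep : Multiset.replicate 2 f₁ ≤ S := by
    rw [hS]
    exact le_trans ((Multiset.replicate_le_replicate f₁).mpr (by omega))
      (Multiset.le_add_right _ _)
  have hE : S' + Multiset.replicate 2 f₁ = S + {f₁ + g, f₁ - g} := by
    rw [hS', add_right_comm, tsub_add_cancel_of_le hrep]
  -- image under π
  have hπS' : Multiset.map π S' =
      Multiset.replicate (m - 1) (0 : ZMod m) + Multiset.replicate m (1 : ZMod m) := by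
    rw [hS'eq, Multiset.map_add, Multiset.map_replicate, hπ1, Multiset.map_map]
    congr 1
    have h1 : (π ∘ fun j => y j • e₁ + e₂) = fun _ => (1 : ZMod m) := by
      funext j
      simp only [Function.comp_apply, map_add, map_nsmul, hπ1, hπ2, smul_zero, zero_add]
    rw [h1, Multiset.map_const', hcardu]
  have hπS : Multiset.map π S = Multiset.replicate (m - 1) (π f₁) +
      Multiset.map (fun i => x i • π f₁ + π f₂) (Finset.univ : Finset (Fin m)).val := by
    rw [hS, Multiset.map_add, Multiset.map_replicate, Multiset.map_map]
    congr 1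
    apply Multiset.map_congr rfl
    intro i _
    simp only [Function.comp_apply, map_add, map_nsmul]
  have hstar : Multiset.replicate (m - 1) (0 : ZMod m) + Multiset.replicate m (1 : ZMod m) +
      Multiset.replicate 2 (π f₁) =
      (Multiset.replicate (m - 1) (π f₁) +
        Multiset.map (fun i => x i • π f₁ + π f₂) (Finset.univ : Finset (Fin m)).val) +
      {π f₁ + π g, π f₁ - π g} := by
    have h := congrArg (Multiset.map π) hE
    rw [Multiset.map_add, Multiset.map_add, hπS', hπS, Multiset.map_replicate] at h
    simpa [Multiset.insert_eq_cons, map_add, map_sub] using h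
  by_cases hu0 : π f₁ = 0
  · -- main case: will conclude g = 0 and S' = S
    rw [hu0] at hstar
    have hst1 : Multiset.replicate (m - 1) (0 : ZMod m) + Multiset.replicate m (1 : ZMod m) +
        Multiset.replicate 2 (0 : ZMod m) =
        (Multiset.replicate (m - 1) (0 : ZMod m) + Multiset.replicate m (π f₂)) +
        {π g, -π g} := by
      rw [hstar]
      congr 1
      · congr 1
        rw [show (fun i => x i • (0:ZMod m) + π f₂) = fun _ => π f₂ by funext i; simp,
          Multiset.map_const', hcardu]
      · simp
    have hv1 : π f₂ = 1 := by
      by_contra hv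
      have h1 := congrArg (Multiset.count (1 : ZMod m)) hst1
      simp only [Multiset.count_add] at h1
      rw [Multiset.count_replicate_self, count_repl_ne _ hone, count_repl_ne _ hone,
        count_repl_ne _ (fun h => hv h.symm)] at h1
      have hle : Multiset.count (1 : ZMod m) ({π g, -π g} : Multiset (ZMod m)) ≤ 2 :=
        (Multiset.count_le_card _ _).trans (by simp)
      omega
    have hw0 : π g = 0 := by
      by_contra hw
      have h0 := congrArg (Multiset.count (0 : ZMod m)) hst1
      simp only [Multiset.count_add] at h0
      have hp : (0 : ZMod m) ∉ ({π g, -π g} : Multiset (ZMod m)) := by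
        intro hmem
        rcases (by simpa using hmem : (0 : ZMod m) = π g ∨ (0 : ZMod m) = -π g) with h' | h'
        · exact hw h'.symm
        · exact hw (neg_eq_zero.mp h'.symm)
      rw [Multiset.count_replicate_self, Multiset.count_replicate_self,
        count_repl_ne _ (fun h => hone h.symm),
        count_repl_ne _ (fun h => hone (hv1.symm.trans h.symm)),
        Multiset.count_eq_zero.mpr hp] at h0
      omega
    -- now count e₁ in the G-level equation
    have hy0 : Multiset.count e₁
        (Multiset.map (fun j => y j • e₁ + e₂) (Finset.univ : Finset (Fin m)).val) = 0 := by
      rw [Multiset.count_eq_zero]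
      intro hmem
      obtain ⟨j, _, hj⟩ := Multiset.mem_map.mp hmem
      apply hone
      calc (1 : ZMod m) = π (y j • e₁ + e₂) := by
            simp only [map_add, map_nsmul, hπ1, hπ2, smul_zero, zero_add]
        _ = π e₁ := by rw [hj]
        _ = 0 := hπ1
    have hx0 : Multiset.count e₁
        (Multiset.map (fun i => x i • f₁ + f₂) (Finset.univ : Finset (Fin m)).val) = 0 := by
      rw [Multiset.count_eq_zero]
      intro hmem
      obtain ⟨i, _, hi⟩ := Multiset.mem_map.mp hmem
      apply hone
      calc (1 : ZMod m) = π (x i • f₁ + f₂) := by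
            simp only [map_add, map_nsmul, hu0, hv1, smul_zero, zero_add]
        _ = π e₁ := by rw [hi]
        _ = 0 := hπ1
    have hcE := congrArg (Multiset.count e₁) hE
    rw [hS'eq, hS] at hcE
    simp only [Multiset.count_add] at hcE
    by_cases hef : e₁ = f₁
    · subst hef
      rw [Multiset.count_replicate_self, Multiset.count_replicate_self, hy0, hx0] at hcE
      have hg : g = 0 := by
        by_contra hg
        have hp : e₁ ∉ ({e₁ + g, e₁ - g} : Multiset (ZMod m × ZMod m)) := by
          intro hmem
          rcases (by simpa using hmem : e₁ = e₁ + g ∨ e₁ = e₁ - g) with h' | h'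
          · exact hg (add_eq_left.mp h'.symm)
          · exact hg (sub_eq_self.mp h'.symm)
        rw [Multiset.count_eq_zero.mpr hp] at hcE
        omega
      refine ⟨hg, ?_⟩
      rw [hS', hg]
      have hpair : ({e₁ + 0, e₁ - 0} : Multiset (ZMod m × ZMod m)) =
          Multiset.replicate 2 e₁ := by
        simp [Multiset.insert_eq_cons, Multiset.replicate_succ]
      rw [hpair, tsub_add_cancel_of_le hrep]
    · rw [Multiset.count_replicate_self, hy0, hx0, count_repl_ne _ hef,
        count_repl_ne _ hef] at hcE
      have hle : Multiset.count e₁ ({f₁ + g, f₁ - g} : Multiset (ZMod m × ZMod m)) ≤ 2 :=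
        (Multiset.count_le_card _ _).trans (by simp)
      omega
  · -- contradiction case
    exfalso
    have hu1 : π f₁ = 1 := by
      by_contra hu1
      have hcu := congrArg (Multiset.count (π f₁)) hstar
      simp only [Multiset.count_add] at hcu
      rw [Multiset.count_replicate_self, Multiset.count_replicate_self,
        count_repl_ne _ hu0, count_repl_ne _ hu1] at hcu
      omega
    rw [hu1] at hstar
    have hmem : ∀ z ∈ ({(1 : ZMod m) + π g, 1 - π g} : Multiset (ZMod m)),
        z = 0 ∨ z = 1 := by
      intro z hz
      have hzmem : z ∈ Multiset.replicate (m - 1) (0 : ZMod m) +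
          Multiset.replicate m (1 : ZMod m) + Multiset.replicate 2 (1 : ZMod m) := by
        rw [hstar]
        exact Multiset.mem_add.mpr (Or.inr hz)
      rcases Multiset.mem_add.mp hzmem with h | h
      · rcases Multiset.mem_add.mp h with h | h
        · exact Or.inl (Multiset.eq_of_mem_replicate h)
        · exact Or.inr (Multiset.eq_of_mem_replicate h)
      · exact Or.inr (Multiset.eq_of_mem_replicate h)
    have h2z : (2 : ZMod m) ≠ 0 := by
      intro h
      have h' : ((2 : ℕ) : ZMod m) = 0 := by push_cast; exact h
      rw [ZMod.natCast_eq_zero_iff] at h'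
      have := Nat.le_of_dvd (by norm_num) h'
      omega
    have h21 : (2 : ZMod m) ≠ 1 := by
      intro h
      apply hone
      linear_combination h
    have hw0 : π g = 0 := by
      rcases hmem (1 + π g) (by simp) with h | h
      · have hg1 : π g = -1 := by linear_combination h
        rcases hmem (1 - π g) (by simp) with h' | h'
        · exact absurd (by rw [hg1] at h'; linear_combination h') h2z
        · exact absurd (by rw [hg1] at h'; linear_combination h') h21
      · linear_combination h
    rw [hw0] at hstar
    -- count 0 in hstar
    have hA := congrArg (Multiset.count (0 : ZMod m)) hstar
    simp only [Multiset.count_add] at hA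
    rw [count_map_univ (fun i => x i • (1 : ZMod m) + π f₂) 0
      (fun i => x i • (1 : ZMod m) + π f₂ = 0) (fun i => Iff.rfl)] at hA
    have hp0 : (0 : ZMod m) ∉ ({1 + 0, 1 - 0} : Multiset (ZMod m)) := by
      intro hmem'
      rcases (by simpa using hmem' : (0 : ZMod m) = 1 + 0 ∨ (0 : ZMod m) = 1 - 0) with h' | h' <;>
        · apply hone
          simpa using h'.symm
    rw [Multiset.count_replicate_self, count_repl_ne _ (fun h => hone h.symm),
      count_repl_ne _ (fun h => hone h.symm), count_repl_ne _ (fun h => hone h.symm),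
      Multiset.count_eq_zero.mpr hp0] at hA
    set A : Finset (Fin m) := Finset.filter (fun i => x i • (1 : ZMod m) + π f₂ = 0) Finset.univ
      with hAdef
    have hAcard : A.card = m - 1 := by omega
    have hAcc : Aᶜ.card = 1 := by
      rw [Finset.card_compl, hAcard, Fintype.card_fin]
      omega
    obtain ⟨j, hj⟩ := Finset.card_eq_one.mp hAcc
    have hmemA : ∀ i, i ≠ j → i ∈ A := by
      intro i hi
      by_contra h
      exact hi (Finset.mem_singleton.mp (hj ▸ Finset.mem_compl.mpr h))
    have hjA : j ∉ A := Finset.mem_compl.mp (hj ▸ Finset.mem_singleton_self j)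
    obtain ⟨i₀, hi₀⟩ := Fintype.exists_ne_of_one_lt_card (by rw [Fintype.card_fin]; omega) j
    have hi₀A : i₀ ∈ A := hmemA i₀ hi₀
    have hxlt : ∀ i, x i < m := fun i => by have := hx i; omega
    have hxc : ∀ i, i ≠ j → x i = x i₀ := by
      intro i hi
      have h1 := (Finset.mem_filter.mp (hmemA i hi)).2
      have h2 := (Finset.mem_filter.mp hi₀A).2
      apply natCast_inj_of_lt (hxlt i) (hxlt i₀)
      have h3 := add_right_cancel (h1.trans h2.symm)
      simpa using h3
    have hxj : x j ≠ x i₀ := by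
      intro h
      apply hjA
      rw [hAdef, Finset.mem_filter]
      refine ⟨Finset.mem_univ j, ?_⟩
      rw [h]
      exact (Finset.mem_filter.mp hi₀A).2
    -- the two counts in S
    have hρmap : ∀ i : Fin m, ρ (x i • f₁ + f₂) = 1 := by
      intro i
      simp only [map_add, map_nsmul, hρ1, hρ2, smul_zero, zero_add]
    have hcf₁ : S.count f₁ = m - 1 := by
      rw [hS, Multiset.count_add, Multiset.count_replicate_self]
      have h0 : Multiset.count f₁
          (Multiset.map (fun i => x i • f₁ + f₂) (Finset.univ : Finset (Fin m)).val) = 0 := by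
        rw [Multiset.count_eq_zero]
        intro hmem'
        obtain ⟨i, _, hi⟩ := Multiset.mem_map.mp hmem'
        exact hone (by rw [← hρmap i, hi, hρ1])
      omega
    have hne : x i₀ • f₁ + f₂ ≠ f₁ := fun h => hone (by rw [← hρmap i₀, h, hρ1])
    have hcc : S.count (x i₀ • f₁ + f₂) = m - 1 := by
      rw [hS, Multiset.count_add, count_repl_ne _ hne]
      rw [count_map_univ (fun i => x i • f₁ + f₂) (x i₀ • f₁ + f₂) (fun i => i ≠ j)
        (fun i => ⟨fun hi => show x i • f₁ + f₂ = x i₀ • f₁ + f₂ by rw [hxc i hi], fun hi => by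
          intro hij
          apply hxj
          subst hij
          exact hρinj _ _ (hxlt i) (hxlt i₀) (add_right_cancel hi)⟩)]
      rw [Finset.filter_ne', Finset.card_erase_of_mem (Finset.mem_univ j),
        Finset.card_univ, Fintype.card_fin]
      omega
    obtain ⟨h, _, hu⟩ := hSU.2
    exact hne ((hu (x i₀ • f₁ + f₂) hcc).trans (hu f₁ hcf₁).symm)
end

section
/- Let m ≥ 4, let G = (ℤ/mℤ)², let g ∈ G, and let S = f₁^[m−1] · ∏_{i=1}^{m} (x_i f₁ + f₂) ∈ Υ_u(G), where (f₁,f₂) is a basis of G and x₁,…,x_m ∈ [0,m−1]. If, for some j ∈ [1,m], S' = f₁^[−1] · (x_j f₁ + f₂)^[−1] · S · (f₁+g) · (x_j f₁ + f₂ − g) ∈ Υ(G), then g ∈ {0, (x_j − 1)f₁ + f₂} and S' = S. -/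
section helpers
variable {m : ℕ}

private lemma basis_surj {f₁ f₂ : ZMod m × ZMod m} (hb : IsBasis f₁ f₂)
    (v : ZMod m × ZMod m) : ∃ s t : ZMod m, v = s • f₁ + t • f₂ := by
  have hv : v ∈ AddSubgroup.zmultiples f₁ ⊔ AddSubgroup.zmultiples f₂ := by
    rw [hb.1]; trivial
  rw [AddSubgroup.mem_sup] at hv
  obtain ⟨a, ha, b, hbm, hab⟩ := hv
  rw [AddSubgroup.mem_zmultiples_iff] at ha hbm
  obtain ⟨k, hk⟩ := ha
  obtain ⟨l, hl⟩ := hbm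
  exact ⟨(k : ZMod m), (l : ZMod m), by
    rw [Int.cast_smul_eq_zsmul, Int.cast_smul_eq_zsmul, hk, hl, hab]⟩

private lemma basis_inj (hm : 2 ≤ m) {f₁ f₂ : ZMod m × ZMod m} (hb : IsBasis f₁ f₂)
    {s t s' t' : ZMod m} (h : s • f₁ + t • f₂ = s' • f₁ + t' • f₂) : s = s' ∧ t = t' := by
  haveI : NeZero m := ⟨by omega⟩
  have hsurj : Function.Surjective (fun p : ZMod m × ZMod m => p.1 • f₁ + p.2 • f₂) := by
    intro v
    obtain ⟨s, t, hst⟩ := basis_surj hb v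
    exact ⟨(s, t), hst.symm⟩
  have hinj := Finite.injective_iff_surjective.mpr hsurj
  have h2 := hinj (a₁ := (s, t)) (a₂ := (s', t')) h
  exact ⟨congrArg Prod.fst h2, congrArg Prod.snd h2⟩

private lemma cast_pred (hm : 1 ≤ m) : ((m - 1 : ℕ) : ZMod m) = -1 := by
  have h : ((m - 1 : ℕ) : ZMod m) + 1 = 0 := by
    have h2 : ((m - 1 : ℕ) : ZMod m) + ((1 : ℕ) : ZMod m) = ((m - 1 + 1 : ℕ) : ZMod m) := by
      push_cast; ring
    rw [Nat.cast_one] at h2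
    rw [h2, show m - 1 + 1 = m from by omega, ZMod.natCast_self]
  exact eq_neg_of_add_eq_zero_left h

private lemma rep_count [DecidableEq (ZMod m × ZMod m)] (a v : ZMod m × ZMod m)
    (f : Fin m → ZMod m × ZMod m) :
    (Multiset.replicate (m - 1) a + Multiset.map f (Finset.univ : Finset (Fin m)).val).count v
      = (if v = a then m - 1 else 0) + (Finset.univ.filter (fun i => v = f i)).card := by
  rw [Multiset.count_add, Multiset.count_replicate, Multiset.count_map]
  congr 1
  simp [eq_comm]

private lemma rep_sum_eq (a b : ZMod m × ZMod m) (X : Fin m → ZMod m) :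
    (Multiset.replicate (m - 1) a +
        Multiset.map (fun i => X i • a + b) (Finset.univ : Finset (Fin m)).val).sum
      = (((m - 1 : ℕ) : ZMod m) + ∑ i, X i) • a + (m : ℕ) • b := by
  rw [Multiset.sum_add, Multiset.sum_replicate]
  have hmap : (Multiset.map (fun i => X i • a + b) (Finset.univ : Finset (Fin m)).val).sum
      = ∑ i : Fin m, (X i • a + b) := rfl
  rw [hmap, Finset.sum_add_distrib, ← Finset.sum_smul, Finset.sum_const, Finset.card_univ,
    Fintype.card_fin, add_smul, ← Nat.cast_smul_eq_nsmul (ZMod m) (m - 1) a]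
  abel

private lemma upsilon_sum (hm : 2 ≤ m) {S : Multiset (ZMod m × ZMod m)}
    (hS : S ∈ Upsilon m) : S.sum = 0 := by
  haveI : NeZero m := ⟨by omega⟩
  obtain ⟨a, b, x, hb, hx, hsum, rfl⟩ := hS
  have hfun : (fun i => x i • a + b) = fun i => ((x i : ZMod m)) • a + b := by
    funext i; rw [Nat.cast_smul_eq_nsmul]
  rw [hfun, rep_sum_eq]
  have h1 : ∑ i, ((x i : ZMod m)) = 1 := by
    rw [← Nat.cast_sum]
    have h2 : ((∑ i, x i : ℕ) : ZMod m) = ((1 : ℕ) : ZMod m) :=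
      (ZMod.natCast_eq_natCast_iff _ _ _).mpr hsum
    rw [h2, Nat.cast_one]
  rw [h1, cast_pred (by omega), neg_add_cancel, zero_smul, zero_add,
    ← Nat.cast_smul_eq_nsmul (ZMod m), ZMod.natCast_self, zero_smul]

private lemma count_pair (v a b : ZMod m × ZMod m) :
    Multiset.count v ({a, b} : Multiset (ZMod m × ZMod m))
      = (if v = a then 1 else 0) + (if v = b then 1 else 0) := by
  rw [show ({a, b} : Multiset (ZMod m × ZMod m)) = a ::ₘ {b} from rfl,
    Multiset.count_cons, Multiset.count_singleton]
  exact Nat.add_comm _ _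

end helpers

theorem stmt_1 (m : ℕ) (hm : 4 ≤ m) (g f₁ f₂ : ZMod m × ZMod m)
    (x : Fin m → ℕ) (hx : ∀ i, x i ≤ m - 1) (hbasis : IsBasis f₁ f₂)
    (S : Multiset (ZMod m × ZMod m))
    (hS : S = Multiset.replicate (m - 1) f₁ +
        Multiset.map (fun i => x i • f₁ + f₂) (Finset.univ : Finset (Fin m)).val)
    (hSU : S ∈ UpsilonU m)
    (j : Fin m)
    (S' : Multiset (ZMod m × ZMod m))
    (hS' : S' = (S - {f₁, x j • f₁ + f₂}) + {f₁ + g, x j • f₁ + f₂ - g})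
    (hS'U : S' ∈ Upsilon m) :
    (g = 0 ∨ g = ((x j : ℤ) - 1) • f₁ + f₂) ∧ S' = S := by
  haveI : NeZero m := ⟨by omega⟩
  haveI hf1m : Fact (1 < m) := ⟨by omega⟩
  obtain ⟨hSin, hUniq⟩ := hSU
  obtain ⟨e₁, e₂, y, hbasis', hy, hysum, hrep⟩ := hS'U
  set u := x j • f₁ + f₂ with hu_def
  have hfun : (fun i => x i • f₁ + f₂) = (fun i => ((x i : ℕ) : ZMod m) • f₁ + f₂) := by
    funext i; rw [Nat.cast_smul_eq_nsmul]
  rw [hfun] at hS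
  have huX : u = ((x j : ℕ) : ZMod m) • f₁ + f₂ := by
    rw [hu_def, Nat.cast_smul_eq_nsmul]
  have inj : ∀ {s t s' t' : ZMod m}, s • f₁ + t • f₂ = s' • f₁ + t' • f₂ → s = s' ∧ t = t' :=
    fun h => basis_inj (by omega) hbasis h
  have inj_e : ∀ {s t s' t' : ZMod m}, s • e₁ + t • e₂ = s' • e₁ + t' • e₂ → s = s' ∧ t = t' :=
    fun h => basis_inj (by omega) hbasis' h
  have one0 : (1 : ZMod m) ≠ 0 := one_ne_zero
  have hterm_eq : ∀ s t : ZMod m, s • f₁ + f₂ = t • f₁ + f₂ → s = t := by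
    intro s t h
    have h' : s • f₁ + (1 : ZMod m) • f₂ = t • f₁ + (1 : ZMod m) • f₂ := by
      simpa only [one_smul] using h
    exact (inj h').1
  have hterm_ne_f₁ : ∀ s : ZMod m, s • f₁ + f₂ ≠ f₁ := by
    intro s h
    have h' : s • f₁ + (1 : ZMod m) • f₂ = (1 : ZMod m) • f₁ + (0 : ZMod m) • f₂ := by
      simp only [one_smul, zero_smul, add_zero]; exact h
    exact one0 (inj h').2
  have hcount_S : ∀ v, S.count v = (if v = f₁ then m - 1 else 0)
      + (Finset.univ.filter (fun i => v = ((x i : ℕ) : ZMod m) • f₁ + f₂)).card := by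
    intro v; rw [hS]; exact rep_count f₁ v _
  have hcount_S' : ∀ v, S'.count v
      = (S.count v - Multiset.count v ({f₁, u} : Multiset (ZMod m × ZMod m)))
        + Multiset.count v ({f₁ + g, u - g} : Multiset (ZMod m × ZMod m)) := by
    intro v; rw [hS', Multiset.count_add, Multiset.count_sub]
  have hcf₁S : S.count f₁ = m - 1 := by
    rw [hcount_S, if_pos rfl]
    have h0 : (Finset.univ.filter (fun i => f₁ = ((x i : ℕ) : ZMod m) • f₁ + f₂)).card = 0 := by
      rw [Finset.card_eq_zero, Finset.filter_eq_empty_iff]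
      intro i _
      exact fun h => hterm_ne_f₁ ((x i : ℕ) : ZMod m) h.symm
    omega
  have hcuS : 1 ≤ S.count u := by
    rw [Multiset.one_le_count_iff_mem, hS]
    exact Multiset.mem_add.mpr (Or.inr (Multiset.mem_map.mpr
      ⟨j, Finset.mem_val.mpr (Finset.mem_univ j), huX.symm⟩))
  have hf₁_ne_u : f₁ ≠ u := by
    rw [huX]; exact fun h => hterm_ne_f₁ ((x j : ℕ) : ZMod m) h.symm
  have hpair_le : ({f₁, u} : Multiset (ZMod m × ZMod m)) ≤ S := by
    rw [Multiset.le_iff_count]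
    intro v
    rw [count_pair]
    by_cases h1 : v = f₁
    · subst h1; rw [if_pos rfl, if_neg hf₁_ne_u, hcf₁S]; omega
    · by_cases h2 : v = u
      · subst h2; rw [if_neg h1, if_pos rfl]; omega
      · rw [if_neg h1, if_neg h2]; omega
  have hcE : S'.count e₁ = m - 1 := by
    rw [hrep, rep_count, if_pos rfl]
    have h0 : (Finset.univ.filter (fun i => e₁ = y i • e₁ + e₂)).card = 0 := by
      rw [Finset.card_eq_zero, Finset.filter_eq_empty_iff]
      intro i _ h
      have h' : (1 : ZMod m) • e₁ + (0 : ZMod m) • e₂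
          = ((y i : ℕ) : ZMod m) • e₁ + (1 : ZMod m) • e₂ := by
        simp only [one_smul, zero_smul, add_zero, Nat.cast_smul_eq_nsmul]
        exact h
      exact one0 (inj_e h').2.symm
    omega
  have hsumX : ∑ i, ((x i : ℕ) : ZMod m) = 1 := by
    have h0 : S.sum = 0 := upsilon_sum (by omega) hSin
    rw [hS, rep_sum_eq, ← Nat.cast_smul_eq_nsmul (ZMod m) m f₂, ZMod.natCast_self, zero_smul,
      add_zero] at h0
    have h0' : (((m - 1 : ℕ) : ZMod m) + ∑ i, ((x i : ℕ) : ZMod m)) • f₁ + (0 : ZMod m) • f₂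
        = (0 : ZMod m) • f₁ + (0 : ZMod m) • f₂ := by
      simp only [zero_smul, add_zero]; exact h0
    have h1 := (inj h0').1
    rw [cast_pred (by omega)] at h1
    linear_combination h1
  by_cases he : e₁ = f₁
  · -- e₁ = f₁
    rw [he] at hcE
    have hnew : Multiset.count f₁ ({f₁ + g, u - g} : Multiset (ZMod m × ZMod m)) = 1 := by
      have h := hcount_S' f₁
      rw [hcE, hcf₁S, count_pair, if_pos rfl, if_neg hf₁_ne_u] at h
      omega
    rw [count_pair] at hnew
    by_cases hg0 : f₁ = f₁ + g
    · have hg : g = 0 := left_eq_add.mp hg0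
      subst hg
      refine ⟨Or.inl rfl, ?_⟩
      rw [hS', add_zero, sub_zero]
      exact tsub_add_cancel_of_le hpair_le
    · rw [if_neg hg0] at hnew
      have hgu : f₁ = u - g := by
        by_contra hh
        rw [if_neg hh] at hnew
        omega
      have hg : g = u - f₁ := by
        rw [eq_sub_iff_add_eq] at hgu ⊢
        rw [add_comm]; exact hgu
      constructor
      · right
        have hz : ((x j : ℤ) - 1) • f₁ + f₂ = ((x j : ℕ) : ZMod m) • f₁ + f₂ - f₁ := by
          rw [sub_smul, one_zsmul, ← Int.cast_smul_eq_zsmul (ZMod m), Int.cast_natCast]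
          abel
        rw [hg, huX]
        exact hz.symm
      · rw [hS']
        have hp2 : ({f₁ + g, u - g} : Multiset (ZMod m × ZMod m)) = {f₁, u} := by
          have h1 : f₁ + g = u := by rw [hg]; abel
          rw [h1, ← hgu, Multiset.pair_comm]
        rw [hp2]
        exact tsub_add_cancel_of_le hpair_le
  · -- e₁ ≠ f₁ : derive a contradiction
    exfalso
    set A := (Finset.univ.filter (fun i => e₁ = ((x i : ℕ) : ZMod m) • f₁ + f₂)).card
      with hA_def
    have hceS : S.count e₁ = A := by
      rw [hcount_S, if_neg he, zero_add]
    have hmaster : m - 1 = (A - (if e₁ = u then 1 else 0))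
        + ((if e₁ = f₁ + g then 1 else 0) + (if e₁ = u - g then 1 else 0)) := by
      have h := hcount_S' e₁
      rw [hcE, hceS, count_pair, count_pair, if_neg he, zero_add] at h
      exact h
    have hd1le : (if e₁ = f₁ + g then 1 else 0) ≤ 1 := by split <;> omega
    have hd2le : (if e₁ = u - g then 1 else 0) ≤ 1 := by split <;> omega
    have hd0le : (if e₁ = u then 1 else 0) ≤ 1 := by split <;> omega
    have hApos : 0 < (Finset.univ.filter
        (fun i => e₁ = ((x i : ℕ) : ZMod m) • f₁ + f₂)).card := by
      rw [← hA_def]; omega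
    obtain ⟨i₁, hi₁⟩ := Finset.card_pos.mp hApos
    have he₁c : e₁ = ((x i₁ : ℕ) : ZMod m) • f₁ + f₂ := (Finset.mem_filter.mp hi₁).2
    set c := ((x i₁ : ℕ) : ZMod m) with hc_def
    have hAne : A ≠ m - 1 := by
      intro hAeq
      obtain ⟨h₀, _, hun⟩ := hUniq
      have h1 : f₁ = h₀ := hun f₁ hcf₁S
      have h2 : e₁ = h₀ := hun e₁ (show Multiset.count e₁ S = m - 1 by rw [hceS, hAeq])
      exact he (h2.trans h1.symm)
    have hf₁S' : f₁ ∈ S' := by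
      rw [← Multiset.one_le_count_iff_mem, hcount_S' f₁, hcf₁S, count_pair, if_pos rfl,
        if_neg hf₁_ne_u]
      omega
    rw [hrep] at hf₁S'
    obtain ⟨i₀, _, hi₀⟩ : ∃ i ∈ (Finset.univ : Finset (Fin m)).val, y i • e₁ + e₂ = f₁ := by
      rcases Multiset.mem_add.mp hf₁S' with hmem | hmem
      · exact absurd (Multiset.eq_of_mem_replicate hmem).symm he
      · exact Multiset.mem_map.mp hmem
    have he₂ : e₂ = f₁ - y i₀ • e₁ := eq_sub_of_add_eq' hi₀
    have hclass : ∀ v, v ∈ S' → v = e₁ ∨ ∃ k : ℤ, v = f₁ + k • e₁ := by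
      intro v hv
      rw [hrep] at hv
      rcases Multiset.mem_add.mp hv with hmem | hmem
      · exact Or.inl (Multiset.eq_of_mem_replicate hmem)
      · obtain ⟨i, _, hi⟩ := Multiset.mem_map.mp hmem
        refine Or.inr ⟨(y i : ℤ) - (y i₀ : ℤ), ?_⟩
        rw [← hi, he₂, sub_smul, natCast_zsmul, natCast_zsmul]
        abel
    have hdich : ∀ s : ZMod m, (s • f₁ + f₂) ∈ S' → s = c ∨ s = c + 1 := by
      intro s hv
      rcases hclass _ hv with h | ⟨k, hk⟩
      · exact Or.inl (hterm_eq s c (h.trans he₁c))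
      · right
        have hk' : s • f₁ + (1 : ZMod m) • f₂
            = (1 + (k : ZMod m) * c) • f₁ + (k : ZMod m) • f₂ := by
          rw [one_smul, hk, he₁c, ← Int.cast_smul_eq_zsmul (ZMod m)]
          module
        obtain ⟨h1, h2⟩ := inj hk'
        rw [h1, ← h2]
        ring
    have hmem_term : ∀ i : Fin m, (((x i : ℕ) : ZMod m) • f₁ + f₂) ≠ u
        → (((x i : ℕ) : ZMod m) • f₁ + f₂) ∈ S' := by
      intro i hne
      have h1 : 1 ≤ S.count (((x i : ℕ) : ZMod m) • f₁ + f₂) := by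
        rw [Multiset.one_le_count_iff_mem, hS]
        exact Multiset.mem_add.mpr (Or.inr (Multiset.mem_map.mpr
          ⟨i, Finset.mem_val.mpr (Finset.mem_univ i), rfl⟩))
      rw [← Multiset.one_le_count_iff_mem, hcount_S' _, count_pair,
        if_neg (fun h => hterm_ne_f₁ ((x i : ℕ) : ZMod m) h), if_neg hne]
      omega
    have hcc1 : c ≠ c + 1 := fun h => one0 (left_eq_add.mp h)
    have hAfil : Finset.univ.filter (fun i => e₁ = ((x i : ℕ) : ZMod m) • f₁ + f₂)
        = Finset.univ.filter (fun i => ((x i : ℕ) : ZMod m) = c) := by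
      apply Finset.filter_congr
      intro i _
      constructor
      · intro h; exact (hterm_eq c ((x i : ℕ) : ZMod m) (he₁c.symm.trans h)).symm
      · intro h; rw [h]; exact he₁c
    by_cases hdup : ∃ i, i ≠ j ∧ ((x i : ℕ) : ZMod m) = ((x j : ℕ) : ZMod m)
    · -- the term u occurs at least twice among the xᵢ-terms
      obtain ⟨i₂, hi₂j, hXi₂⟩ := hdup
      have hcuS2 : 2 ≤ S.count u := by
        rw [hcount_S]
        have hsub : ({i₂, j} : Finset (Fin m)) ⊆
            Finset.univ.filter (fun i => u = ((x i : ℕ) : ZMod m) • f₁ + f₂) := by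
          intro i hi
          rcases Finset.mem_insert.mp hi with h | h
          · subst h; exact Finset.mem_filter.mpr ⟨Finset.mem_univ _, by rw [huX, hXi₂]⟩
          · rw [Finset.mem_singleton] at h; subst h
            exact Finset.mem_filter.mpr ⟨Finset.mem_univ _, huX⟩
        have h2 := Finset.card_le_card hsub
        rw [Finset.card_pair hi₂j] at h2
        omega
      have humem : u ∈ S' := by
        rw [← Multiset.one_le_count_iff_mem, hcount_S' u, count_pair,
          if_neg (fun h : u = f₁ => hf₁_ne_u h.symm), if_pos rfl]
        omega
      have hall : ∀ i, ((x i : ℕ) : ZMod m) = c ∨ ((x i : ℕ) : ZMod m) = c + 1 := by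
        intro i
        by_cases h : ((x i : ℕ) : ZMod m) • f₁ + f₂ = u
        · exact hdich _ (by rw [h]; exact humem)
        · exact hdich _ (hmem_term i h)
      set b := (Finset.univ.filter (fun i => ((x i : ℕ) : ZMod m) = c + 1)).card with hb_def
      have hcompl : Finset.univ.filter (fun i => ¬ ((x i : ℕ) : ZMod m) = c + 1)
          = Finset.univ.filter (fun i => ((x i : ℕ) : ZMod m) = c) := by
        apply Finset.filter_congr
        intro i _
        constructor
        · intro hn; exact (hall i).resolve_right hn
        · intro hc h1; exact hcc1 ((hc ▸ h1 : c = c + 1))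
      have hcards : b + A = m := by
        have h := Finset.card_filter_add_card_filter_not
          (s := Finset.univ) (p := fun i => ((x i : ℕ) : ZMod m) = c + 1)
        rw [hcompl, ← hAfil, Finset.card_univ, Fintype.card_fin, ← hA_def, ← hb_def] at h
        exact h
      have hsum2 : ∑ i, ((x i : ℕ) : ZMod m) = (b : ZMod m) * (c + 1) + (A : ZMod m) * c := by
        rw [← Finset.sum_filter_add_sum_filter_not Finset.univ
          (fun i => ((x i : ℕ) : ZMod m) = c + 1)]
        congr 1
        · rw [Finset.sum_congr rfl (fun i hi => (Finset.mem_filter.mp hi).2), Finset.sum_const,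
            nsmul_eq_mul, ← hb_def]
        · rw [hcompl, Finset.sum_congr rfl (fun i hi => (Finset.mem_filter.mp hi).2),
            Finset.sum_const, nsmul_eq_mul, ← hAfil, ← hA_def]
      have hAcast : (A : ZMod m) = - (b : ZMod m) := by
        have hanat : A = m - b := by omega
        rw [hanat, Nat.cast_sub (by omega), ZMod.natCast_self, zero_sub]
      have hb1 : (b : ZMod m) = 1 := by
        rw [hsumX, hAcast] at hsum2
        linear_combination -hsum2
      have hbnat : b = 1 := by
        by_cases hbm : b = m
        · rw [hbm, ZMod.natCast_self] at hb1
          exact absurd hb1.symm one0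
        · have hlt : b < m := by omega
          have hv := ZMod.val_cast_of_lt hlt
          rw [hb1, ZMod.val_one] at hv
          omega
      exact hAne (by omega)
    · push_neg at hdup
      have hune : ¬ (e₁ = u) := by
        intro hue
        have hXj : ((x j : ℕ) : ZMod m) = c :=
          (hterm_eq c ((x j : ℕ) : ZMod m) (he₁c.symm.trans (hue.trans huX))).symm
        have hsub : Finset.univ.filter
            (fun i => e₁ = ((x i : ℕ) : ZMod m) • f₁ + f₂) ⊆ {j} := by
          intro i hi
          have hXi : ((x i : ℕ) : ZMod m) = c :=
            (hterm_eq c _ (he₁c.symm.trans (Finset.mem_filter.mp hi).2)).symm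
          rw [Finset.mem_singleton]
          by_contra hij
          exact hdup i hij (hXi.trans hXj.symm)
        have hA_le : A ≤ 1 := by
          have h := Finset.card_le_card hsub
          rw [Finset.card_singleton] at h
          rw [hA_def]; exact h
        rw [if_pos hue] at hmaster
        omega
      rw [if_neg hune, Nat.sub_zero] at hmaster
      have hXjc : ((x j : ℕ) : ZMod m) ≠ c := by
        intro h
        exact hune (by rw [huX, h]; exact he₁c)
      set E := Finset.univ.erase j with hE_def
      have hdichE : ∀ i ∈ E, ((x i : ℕ) : ZMod m) = c ∨ ((x i : ℕ) : ZMod m) = c + 1 := by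
        intro i hi
        have hij := (Finset.mem_erase.mp hi).1
        refine hdich _ (hmem_term i ?_)
        intro h
        rw [huX] at h
        exact hdup i hij (hterm_eq _ _ h)
      set b' := (E.filter (fun i => ((x i : ℕ) : ZMod m) = c + 1)).card with hb'_def
      have hcomplE : E.filter (fun i => ¬ ((x i : ℕ) : ZMod m) = c + 1)
          = E.filter (fun i => ((x i : ℕ) : ZMod m) = c) := by
        apply Finset.filter_congr
        intro i hi
        constructor
        · intro hn; exact (hdichE i hi).resolve_right hn
        · intro hc h1; exact hcc1 ((hc ▸ h1 : c = c + 1))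
      have hcardE : E.card = m - 1 := by
        rw [hE_def, Finset.card_erase_of_mem (Finset.mem_univ j), Finset.card_univ,
          Fintype.card_fin]
      have hAfilE : Finset.univ.filter (fun i => e₁ = ((x i : ℕ) : ZMod m) • f₁ + f₂)
          = E.filter (fun i => ((x i : ℕ) : ZMod m) = c) := by
        ext i
        constructor
        · intro hmem
          have h := (Finset.mem_filter.mp hmem).2
          have hXi : ((x i : ℕ) : ZMod m) = c := (hterm_eq c _ (he₁c.symm.trans h)).symm
          refine Finset.mem_filter.mpr ⟨?_, hXi⟩
          rw [hE_def, Finset.mem_erase]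
          exact ⟨fun hij => hXjc (by rw [← hij]; exact hXi), Finset.mem_univ i⟩
        · intro hmem
          obtain ⟨hiE, hXi⟩ := Finset.mem_filter.mp hmem
          refine Finset.mem_filter.mpr ⟨Finset.mem_univ i, ?_⟩
          rw [hXi]; exact he₁c
      have hb'A : b' + A = m - 1 := by
        have h := Finset.card_filter_add_card_filter_not
          (s := E) (p := fun i => ((x i : ℕ) : ZMod m) = c + 1)
        rw [hcomplE, ← hAfilE, hcardE, ← hA_def, ← hb'_def] at h
        exact h
      have hsumE : ∑ i ∈ E, ((x i : ℕ) : ZMod m) = (b' : ZMod m) * (c + 1) + (A : ZMod m) * c := by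
        rw [← Finset.sum_filter_add_sum_filter_not E (fun i => ((x i : ℕ) : ZMod m) = c + 1)]
        congr 1
        · rw [Finset.sum_congr rfl (fun i hi => (Finset.mem_filter.mp hi).2), Finset.sum_const,
            nsmul_eq_mul, ← hb'_def]
        · rw [hcomplE, Finset.sum_congr rfl (fun i hi => (Finset.mem_filter.mp hi).2),
            Finset.sum_const, nsmul_eq_mul, ← hAfilE, ← hA_def]
      have hsum_tot : ((x j : ℕ) : ZMod m) + ∑ i ∈ E, ((x i : ℕ) : ZMod m) = 1 := by
        rw [hE_def, ← hsumX]
        exact Finset.add_sum_erase Finset.univ (fun i => ((x i : ℕ) : ZMod m)) (Finset.mem_univ j)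
      have hfinal : A = m - 2 → False := by
        intro hA2
        have hb'1 : b' = 1 := by omega
        have hAcast : (A : ZMod m) = -2 := by
          rw [hA2]
          have h : ((m - 2 : ℕ) : ZMod m) + 2 = 0 := by
            rw [show (2 : ZMod m) = ((2 : ℕ) : ZMod m) by push_cast; ring, ← Nat.cast_add,
              show m - 2 + 2 = m from by omega, ZMod.natCast_self]
          exact eq_neg_of_add_eq_zero_left h
        rw [hsumE, hb'1, hAcast] at hsum_tot
        apply hXjc
        push_cast at hsum_tot
        linear_combination hsum_tot
      by_cases hw₁ : e₁ = f₁ + g <;> by_cases hw₂ : e₁ = u - g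
      · have h2e : e₁ + e₁ = f₁ + u := by
          nth_rewrite 1 [hw₁]
          nth_rewrite 1 [hw₂]
          abel
        have hco : (c + c) • f₁ + ((1 : ZMod m) + 1) • f₂
            = (1 + ((x j : ℕ) : ZMod m)) • f₁ + (1 : ZMod m) • f₂ := by
          calc (c + c) • f₁ + ((1 : ZMod m) + 1) • f₂
              = (c • f₁ + f₂) + (c • f₁ + f₂) := by module
            _ = e₁ + e₁ := by rw [← he₁c]
            _ = f₁ + u := h2e
            _ = (1 + ((x j : ℕ) : ZMod m)) • f₁ + (1 : ZMod m) • f₂ := by rw [huX]; module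
        have h12 := (inj hco).2
        exact one0 (right_eq_add.mp h12.symm)
      · rw [if_pos hw₁, if_neg hw₂] at hmaster
        exact hfinal (by omega)
      · rw [if_neg hw₁, if_pos hw₂] at hmaster
        exact hfinal (by omega)
      · rw [if_neg hw₁, if_neg hw₂] at hmaster
        exact hAne (by omega)
end

section
/- Let m ≥ 4, let G = (ℤ/mℤ)², let g ∈ G, and let S = f₁^[m−1] · ∏_{i=1}^{m} (x_i f₁ + f₂) ∈ Υ_u(G), where (f₁,f₂) is a basis of G and x₁,…,x_m ∈ [0,m−1]. If, for some distinct j, k ∈ [1,m], S' = (x_j f₁ + f₂)^[−1] · (x_k f₁ + f₂)^[−1] · S · (x_j f₁ + f₂ + g) · (x_k f₁ + f₂ − g) ∈ Υ(G), then g ∈ ⟨f₁⟩. -/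
open AddSubgroup in
lemma notMem_zm (m : ℕ) (hm : 4 ≤ m) (e₁ e₂ : ZMod m × ZMod m)
    (h : IsBasis e₁ e₂) : e₂ ∉ AddSubgroup.zmultiples e₁ := by
  intro hmem
  have : NeZero m := ⟨by omega⟩
  have h1 : zmultiples e₂ ≤ zmultiples e₁ := by
    rw [zmultiples_le]; exact hmem
  have hinf := h.2
  rw [inf_eq_right.mpr h1] at hinf
  have he₂ : e₂ = 0 := by
    have h2 := mem_zmultiples e₂
    rw [hinf] at h2; simpa using h2
  have hsup := h.1
  rw [he₂] at hsup
  have hb : zmultiples (0 : ZMod m × ZMod m) = ⊥ := by simp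
  rw [hb, sup_bot_eq] at hsup
  have hcard : Nat.card (zmultiples e₁) = addOrderOf e₁ := Nat.card_zmultiples e₁
  rw [hsup] at hcard
  have htop : Nat.card (⊤ : AddSubgroup (ZMod m × ZMod m)) = m * m := by
    rw [Nat.card_congr AddSubgroup.topEquiv.toEquiv]
    simp [Nat.card_eq_fintype_card, ZMod.card]
  have hord : addOrderOf e₁ ∣ m := by
    rw [addOrderOf_dvd_iff_nsmul_eq_zero]
    ext <;> simp [ZMod.natCast_self]
  have := Nat.le_of_dvd (by omega) hord
  rw [htop] at hcard
  nlinarith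

lemma key_ne {m : ℕ} (c₁ c₂ : ZMod m × ZMod m)
    (hc : c₂ ∉ AddSubgroup.zmultiples c₁) (t : ℕ) : t • c₁ + c₂ ≠ c₁ := by
  intro h
  apply hc
  rw [AddSubgroup.mem_zmultiples_iff]
  have h2 : c₂ = c₁ - t • c₁ := by rw [eq_sub_iff_add_eq, add_comm]; exact h
  exact ⟨1 - (t : ℤ), by rw [sub_zsmul, one_zsmul, natCast_zsmul, h2]; abel⟩

lemma memz {m : ℕ} (f₁ : ZMod m × ZMod m) (u v : ℕ) :
    u • f₁ - v • f₁ ∈ AddSubgroup.zmultiples f₁ := by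
  rw [AddSubgroup.mem_zmultiples_iff]
  refine ⟨(u : ℤ) - v, ?_⟩
  rw [sub_zsmul, natCast_zsmul, natCast_zsmul]
  abel

theorem stmt_2 (m : ℕ) (hm : 4 ≤ m) (g f₁ f₂ : ZMod m × ZMod m)
    (x : Fin m → ℕ) (hx : ∀ i, x i ≤ m - 1) (hbasis : IsBasis f₁ f₂)
    (S : Multiset (ZMod m × ZMod m))
    (hS : S = Multiset.replicate (m - 1) f₁ +
        Multiset.map (fun i => x i • f₁ + f₂) (Finset.univ : Finset (Fin m)).val)
    (hSU : S ∈ UpsilonU m)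
    (j k : Fin m) (hjk : j ≠ k)
    (S' : Multiset (ZMod m × ZMod m))
    (hS' : S' = (S - {x j • f₁ + f₂, x k • f₁ + f₂}) +
        {x j • f₁ + f₂ + g, x k • f₁ + f₂ - g})
    (hS'U : S' ∈ Upsilon m) :
    g ∈ AddSubgroup.zmultiples f₁ := by
  classical
  set col := Multiset.map (fun i => x i • f₁ + f₂) (Finset.univ : Finset (Fin m)).val with hcol
  set a := x j • f₁ + f₂ with ha
  set b := x k • f₁ + f₂ with hb
  obtain ⟨e₁, e₂, y, hbasis', hy, hsum', hrepr⟩ := hS'U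
  have hf₂ : f₂ ∉ AddSubgroup.zmultiples f₁ := notMem_zm m hm f₁ f₂ hbasis
  have he₂ : e₂ ∉ AddSubgroup.zmultiples e₁ := notMem_zm m hm e₁ e₂ hbasis'
  -- {a, b} ≤ col
  have hab : ({a, b} : Multiset (ZMod m × ZMod m)) ≤ col := by
    have h1 : ({j, k} : Finset (Fin m)).val = (j ::ₘ {k}) := by
      rw [Finset.insert_val_of_notMem (by simp [hjk])]; rfl
    have h2 : ({j, k} : Finset (Fin m)).val ≤ (Finset.univ : Finset (Fin m)).val :=
      Finset.val_le_iff.mpr (Finset.subset_univ _)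
    have h3 := Multiset.map_le_map (f := fun i => x i • f₁ + f₂) h2
    rw [h1, Multiset.map_cons, Multiset.map_singleton] at h3
    rw [Multiset.insert_eq_cons]
    exact h3
  have hsplit : S - {a, b} = Multiset.replicate (m - 1) f₁ + (col - {a, b}) := by
    rw [hS, add_tsub_assoc_of_le hab]
  have hdec : S' = Multiset.replicate (m - 1) f₁ + (col - {a, b}) + {a + g, b - g} := by
    rw [hS', hsplit]
  -- exact count of e₁
  have hys : ∀ t : ℕ, t • e₁ + e₂ ≠ e₁ := key_ne e₁ e₂ he₂
  have hcount : S'.count e₁ = m - 1 := by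
    rw [hrepr, Multiset.count_add, Multiset.count_replicate, if_pos rfl,
      Multiset.count_eq_zero.mpr, add_zero]
    intro hmem
    obtain ⟨i, -, hi⟩ := Multiset.mem_map.mp hmem
    exact hys (y i) hi
  have hstruct : ∀ u ∈ S', u = e₁ ∨ ∃ t : ℕ, u = t • e₁ + e₂ := by
    intro u hu
    rw [hrepr, Multiset.mem_add] at hu
    rcases hu with h | h
    · exact Or.inl (Multiset.eq_of_mem_replicate h)
    · obtain ⟨i, -, hi⟩ := Multiset.mem_map.mp h
      exact Or.inr ⟨y i, hi.symm⟩
  have hcnt : ∀ z, S'.count z =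
      (if f₁ = z then m - 1 else 0) + (col - {a, b}).count z
        + ({a + g, b - g} : Multiset (ZMod m × ZMod m)).count z := by
    intro z
    rw [hdec, Multiset.count_add, Multiset.count_add, Multiset.count_replicate]
  have hcard2 : Multiset.card (col - {a, b}) = m - 2 := by
    rw [Multiset.card_sub hab]
    simp [hcol]
  by_cases hef : e₁ = f₁
  · -- Case A
    have hnz : (col - {a, b}) ≠ 0 := by
      intro h0
      rw [h0] at hcard2
      simp at hcard2
      omega
    obtain ⟨o, ho⟩ := Multiset.exists_mem_of_ne_zero hnz
    have hocol : o ∈ col := Multiset.mem_of_le tsub_le_self ho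
    obtain ⟨i, -, hio⟩ := Multiset.mem_map.mp hocol
    have hoS' : o ∈ S' := by
      rw [hdec]
      exact Multiset.mem_add.mpr (Or.inl (Multiset.mem_add.mpr (Or.inr ho)))
    have hone : o ≠ e₁ := by
      rw [hef, ← hio]
      exact key_ne f₁ f₂ hf₂ (x i)
    obtain ⟨t, hot⟩ := (hstruct o hoS').resolve_left hone
    have hn₁S' : a + g ∈ S' := by rw [hdec]; simp
    have hn₁ne : a + g ≠ e₁ := by
      intro hh
      have h1 := hcnt e₁
      rw [hcount, if_pos hef.symm] at h1
      have h2 : 1 ≤ ({a + g, b - g} : Multiset (ZMod m × ZMod m)).count e₁ := by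
        rw [Multiset.one_le_count_iff_mem, ← hh]
        simp
      omega
    obtain ⟨s, hns⟩ := (hstruct (a + g) hn₁S').resolve_left hn₁ne
    rw [hef] at hot hns
    have he2v : e₂ = x i • f₁ + f₂ - t • f₁ := by
      rw [eq_sub_iff_add_eq, add_comm, ← hot, hio]
    have hg : g = (s + x i) • f₁ - (t + x j) • f₁ := by
      have h5 : g = s • f₁ + e₂ - a := eq_sub_of_add_eq (by rw [← hns]; abel)
      rw [h5, he2v, ha, add_nsmul, add_nsmul]
      abel
    rw [hg]; exact memz f₁ _ _
  · -- Case B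
    have h1 := hcnt e₁
    rw [hcount, if_neg (fun h => hef h.symm)] at h1
    have hle1 : (col - {a, b}).count e₁ ≤ m - 2 := by
      rw [← hcard2]; exact Multiset.count_le_card _ _
    have hle2 : ({a + g, b - g} : Multiset (ZMod m × ZMod m)).count e₁ ≤ 2 := by
      have := Multiset.count_le_card e₁ ({a + g, b - g} : Multiset (ZMod m × ZMod m))
      simpa using this
    have hc1 : 0 < (col - {a, b}).count e₁ := by omega
    have hc2 : 0 < ({a + g, b - g} : Multiset (ZMod m × ZMod m)).count e₁ := by omega
    have hmem1 : e₁ ∈ col := Multiset.mem_of_le tsub_le_self (Multiset.count_pos.mp hc1)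
    obtain ⟨i, -, hi⟩ := Multiset.mem_map.mp hmem1
    have hmem2 : e₁ ∈ ({a + g, b - g} : Multiset (ZMod m × ZMod m)) :=
      Multiset.count_pos.mp hc2
    rw [Multiset.insert_eq_cons, Multiset.mem_cons, Multiset.mem_singleton] at hmem2
    rcases hmem2 with h2 | h2
    · have h5 : g = x i • f₁ - x j • f₁ := by
        have h6 : g = (x i • f₁ + f₂) - a := eq_sub_of_add_eq (by rw [hi, h2]; abel)
        rw [h6, ha]; abel
      rw [h5]; exact memz f₁ _ _
    · have h5 : g = x k • f₁ - x i • f₁ := by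
        have h6 : g = b - (x i • f₁ + f₂) := eq_sub_of_add_eq (by rw [hi, h2]; abel)
        rw [h6, hb]; abel
      rw [h5]; exact memz f₁ _ _
end

section
/- Let m ≥ 4, let G = (ℤ/mℤ)², let g ∈ G, and let S = f₁^[m−1] · f₂^[m−1] · (f₁+f₂) ∈ Υ_nu(G), where (f₁,f₂) is a basis of G. If S' = f₁^[−2] · S · (f₁+g) · (f₁−g) ∈ Υ(G), then g ∈ ⟨f₂⟩. -/
lemma IsBasis.symm' {G : Type*} [AddCommGroup G] {e₁ e₂ : G} (h : IsBasis e₁ e₂) :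
    IsBasis e₂ e₁ := ⟨by rw [sup_comm]; exact h.1, by rw [inf_comm]; exact h.2⟩

lemma basis_snd_notMem {m : ℕ} (hm : 2 ≤ m) {e₁ e₂ : ZMod m × ZMod m} (h : IsBasis e₁ e₂) :
    e₂ ∉ AddSubgroup.zmultiples e₁ := by
  intro hmem
  have h0 : e₂ = 0 := by
    have h' : e₂ ∈ AddSubgroup.zmultiples e₁ ⊓ AddSubgroup.zmultiples e₂ :=
      ⟨hmem, AddSubgroup.mem_zmultiples e₂⟩
    rw [h.2] at h'
    exact (AddSubgroup.mem_bot).mp h'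
  have htop : AddSubgroup.zmultiples e₁ = ⊤ := by
    have h1 := h.1
    rw [h0] at h1
    simpa using h1
  haveI : Fact (1 < m) := ⟨by omega⟩
  have h10 : ((1 : ZMod m), (0 : ZMod m)) ∈ AddSubgroup.zmultiples e₁ := by
    rw [htop]; trivial
  have h01 : ((0 : ZMod m), (1 : ZMod m)) ∈ AddSubgroup.zmultiples e₁ := by
    rw [htop]; trivial
  obtain ⟨a, ha⟩ := AddSubgroup.mem_zmultiples_iff.mp h10
  obtain ⟨b, hb⟩ := AddSubgroup.mem_zmultiples_iff.mp h01
  have ha1 : (a : ZMod m) * e₁.1 = 1 := by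
    have := congrArg Prod.fst ha
    simpa [zsmul_eq_mul] using this
  have ha2 : (a : ZMod m) * e₁.2 = 0 := by
    have := congrArg Prod.snd ha
    simpa [zsmul_eq_mul] using this
  have hb1 : (b : ZMod m) * e₁.1 = 0 := by
    have := congrArg Prod.fst hb
    simpa [zsmul_eq_mul] using this
  have hb2 : (b : ZMod m) * e₁.2 = 1 := by
    have := congrArg Prod.snd hb
    simpa [zsmul_eq_mul] using this
  have : (1 : ZMod m) = 0 := by
    calc (1 : ZMod m) = ((a:ZMod m) * e₁.1) * ((b:ZMod m) * e₁.2) := by rw [ha1, hb2]; ring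
    _ = ((a:ZMod m) * e₁.2) * ((b:ZMod m) * e₁.1) := by ring
    _ = 0 := by rw [ha2]; ring
  exact one_ne_zero this

lemma counts_le {α : Type*} [DecidableEq α] :
    ∀ (l : List α) (s : Multiset α), l.Nodup → (l.map s.count).sum ≤ Multiset.card s := by
  intro l
  induction l with
  | nil => simp
  | cons a l ih =>
    intro s hnd
    have hrep : Multiset.replicate (s.count a) a ≤ s :=
      Multiset.le_count_iff_replicate_le.mp le_rfl
    set t := s - Multiset.replicate (s.count a) a with ht
    have hst : t + Multiset.replicate (s.count a) a = s := tsub_add_cancel_of_le hrep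
    have hcard : Multiset.card t + s.count a = Multiset.card s := by
      have := congrArg Multiset.card hst
      simpa using this
    have hmap : l.map t.count = l.map s.count := by
      apply List.map_congr_left
      intro b hb
      have hba : b ≠ a := by
        rintro rfl
        exact (List.nodup_cons.mp hnd).1 hb
      rw [ht, Multiset.count_sub, Multiset.count_replicate, if_neg hba.symm, Nat.sub_zero]
    have hih := ih t (List.nodup_cons.mp hnd).2
    rw [hmap] at hih
    simp only [List.map_cons, List.sum_cons]
    omega

theorem stmt_3 (m : ℕ) (hm : 4 ≤ m) (g f₁ f₂ : ZMod m × ZMod m)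
    (hbasis : IsBasis f₁ f₂)
    (S : Multiset (ZMod m × ZMod m))
    (hS : S = Multiset.replicate (m - 1) f₁ + Multiset.replicate (m - 1) f₂ + {f₁ + f₂})
    (hSNU : S ∈ UpsilonNU m)
    (S' : Multiset (ZMod m × ZMod m))
    (hS' : S' = (S - Multiset.replicate 2 f₁) + {f₁ + g, f₁ - g})
    (hS'U : S' ∈ Upsilon m) :
    g ∈ AddSubgroup.zmultiples f₂ := by
  by_contra hg
  have hg0 : g ≠ 0 := fun h => hg (h ▸ zero_mem _)
  have hgf2 : g ≠ f₂ := fun h => hg (h ▸ AddSubgroup.mem_zmultiples f₂)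
  have hsymm : IsBasis f₂ f₁ := ⟨by rw [sup_comm]; exact hbasis.1, by rw [inf_comm]; exact hbasis.2⟩
  have hf2n1 : f₂ ∉ AddSubgroup.zmultiples f₁ := basis_snd_notMem (by omega) hbasis
  have hf1n2 : f₁ ∉ AddSubgroup.zmultiples f₂ := basis_snd_notMem (by omega) hsymm
  have hf10 : f₁ ≠ 0 := fun h => hf1n2 (h ▸ zero_mem _)
  have hf20 : f₂ ≠ 0 := fun h => hf2n1 (h ▸ zero_mem _)
  have hf12 : f₁ ≠ f₂ := fun h => hf1n2 (h ▸ AddSubgroup.mem_zmultiples f₁)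
  have hs1 : f₁ + f₂ ≠ f₁ := fun h => hf20 (add_eq_left.mp h)
  have hs2 : f₁ + f₂ ≠ f₂ := fun h => hf10 (add_eq_right.mp h)
  have hgadd : f₁ + g ≠ f₁ := fun h => hg0 (add_eq_left.mp h)
  have hgsub : f₁ - g ≠ f₁ := fun h => hg0 (sub_eq_self.mp h)
  -- generic count formula for S'
  have hcount : ∀ v, S'.count v =
      ((if v = f₁ then m - 1 else 0) + (if v = f₂ then m - 1 else 0) +
        (if v = f₁ + f₂ then 1 else 0)) - (if v = f₁ then 2 else 0) +
      ((if v = f₁ + g then 1 else 0) + (if v = f₁ - g then 1 else 0)) := by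
    intro v
    rw [hS', Multiset.count_add, Multiset.count_sub, hS]
    simp only [Multiset.count_add, Multiset.count_replicate, Multiset.count_singleton,
      Multiset.insert_eq_cons, Multiset.count_cons, eq_comm]
    split_ifs <;> omega
  obtain ⟨e₁, e₂, x, hb, hxle, hxsum, heq⟩ := hS'U
  have hbe2 : e₂ ∉ AddSubgroup.zmultiples e₁ := basis_snd_notMem (by omega) hb
  have hne : ∀ n : ℕ, n • e₁ + e₂ ≠ e₁ := by
    intro n h
    apply hbe2
    refine AddSubgroup.mem_zmultiples_iff.mpr ⟨1 - (n : ℤ), ?_⟩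
    rw [eq_sub_of_add_eq' h, sub_smul, one_smul, natCast_zsmul]
  have hce : S'.count e₁ = m - 1 := by
    rw [heq, Multiset.count_add, Multiset.count_replicate, if_pos rfl,
      Multiset.count_eq_zero.mpr, Nat.add_zero]
    intro hmem
    obtain ⟨i, _, hi⟩ := Multiset.mem_map.mp hmem
    exact hne (x i) hi
  have hcard : Multiset.card S' = 2 * m - 1 := by
    rw [heq]
    simp only [Multiset.card_add, Multiset.card_replicate, Multiset.card_map]
    have : (Finset.univ : Finset (Fin m)).val.card = m := by simp
    omega
  -- counts of f₁ and f₂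
  have hcf1 : S'.count f₁ = m - 3 := by
    rw [hcount f₁]
    simp only [eq_self_iff_true, if_true, if_pos rfl, if_neg hf12, if_neg (Ne.symm hs1), if_neg (Ne.symm hgadd),
      if_neg (Ne.symm hgsub)]
    omega
  have hcf2 : S'.count f₂ = m - 1 +
      ((if f₂ = f₁ + g then 1 else 0) + (if f₂ = f₁ - g then 1 else 0)) := by
    rw [hcount f₂]
    simp only [eq_self_iff_true, if_true, if_neg (Ne.symm hf12), if_pos rfl, if_neg (Ne.symm hs2)]
    omega
  by_cases h2 : f₂ = e₁
  · -- Case 1 : f₂ = e₁; indicators vanish, find structure of f₁ and f₁+g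
    have h' : S'.count f₂ = m - 1 := by rw [h2, hce]
    rw [hcf2] at h'
    have hind : f₂ ≠ f₁ + g := by
      intro h; rw [if_pos h] at h'; omega
    have hmemf1 : f₁ ∈ S' := by
      rw [← Multiset.count_pos, hcf1]; omega
    have hmemg : f₁ + g ∈ S' := by
      rw [← Multiset.count_pos, hcount, if_pos rfl]
      omega
    rw [heq, Multiset.mem_add] at hmemf1 hmemg
    have hf1' : ∃ i, x i • e₁ + e₂ = f₁ := by
      rcases hmemf1 with h | h
      · exact absurd (Multiset.eq_of_mem_replicate h) (h2 ▸ hf12)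
      · obtain ⟨i, _, hi⟩ := Multiset.mem_map.mp h; exact ⟨i, hi⟩
    have hg' : ∃ i, x i • e₁ + e₂ = f₁ + g := by
      rcases hmemg with h | h
      · have := Multiset.eq_of_mem_replicate h
        exact absurd (this.trans h2.symm) (fun hh => hind hh.symm)
      · obtain ⟨i, _, hi⟩ := Multiset.mem_map.mp h; exact ⟨i, hi⟩
    obtain ⟨i, hi⟩ := hg'
    obtain ⟨j, hj⟩ := hf1'
    apply hg
    refine AddSubgroup.mem_zmultiples_iff.mpr ⟨(x i : ℤ) - (x j : ℤ), ?_⟩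
    rw [h2]
    have hz : ((x i : ℤ) - (x j : ℤ)) • e₁ = x i • e₁ + e₂ - (x j • e₁ + e₂) := by
      rw [sub_smul, natCast_zsmul, natCast_zsmul]; abel
    rw [hz, hi, hj]; abel
  · by_cases h1 : f₁ = e₁
    · rw [h1, hce] at hcf1; omega
    · -- Case 2b: e₁, f₁, f₂ distinct
      have h3 : (([e₁, f₁, f₂] : List _)).Nodup := by
        simp [Ne.symm h1, Ne.symm h2, hf12]
      have hb3 := counts_le [e₁, f₁, f₂] S' h3
      rw [hcard] at hb3
      simp only [List.map_cons, List.map_nil, List.sum_cons, List.sum_nil] at hb3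
      rw [hce, hcf1, hcf2] at hb3
      have hind1 : f₂ ≠ f₁ + g := by
        intro h; rw [if_pos h] at hb3; omega
      -- any fourth distinct element gives a contradiction
      have key : ∀ v, v ∈ S' → v = e₁ ∨ v = f₁ ∨ v = f₂ := by
        intro v hv
        by_contra hvn
        push_neg at hvn
        have h4 : (([e₁, f₁, f₂, v] : List _)).Nodup := by
          simp [Ne.symm h1, Ne.symm h2, hf12, Ne.symm hvn.1, Ne.symm hvn.2.1, Ne.symm hvn.2.2]
        have hb4 := counts_le [e₁, f₁, f₂, v] S' h4
        rw [hcard] at hb4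
        simp only [List.map_cons, List.map_nil, List.sum_cons, List.sum_nil] at hb4
        rw [hce, hcf1, hcf2] at hb4
        have hv1 : 0 < S'.count v := Multiset.count_pos.mpr hv
        omega
      have hmem1 : f₁ + f₂ ∈ S' := by
        rw [← Multiset.count_pos, hcount]
        simp only [eq_self_iff_true, if_true, if_neg hs1, if_neg hs2, if_pos rfl]
        omega
      have hmem2 : f₁ + g ∈ S' := by
        rw [← Multiset.count_pos, hcount, if_pos rfl]
        omega
      have he1 : f₁ + f₂ = e₁ := by
        rcases key _ hmem1 with h | h | h
        · exact h
        · exact absurd h hs1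
        · exact absurd h hs2
      have he2 : f₁ + g = e₁ := by
        rcases key _ hmem2 with h | h | h
        · exact h
        · exact absurd h hgadd
        · exact absurd h (fun hh => hind1 hh.symm)
      exact hgf2 (add_left_cancel (he2.trans he1.symm))
end

section
/- Let m ≥ 4, let G = (ℤ/mℤ)², let g ∈ G, and let S = f₁^[m−1] · f₂^[m−1] · (f₁+f₂) ∈ Υ_nu(G), where (f₁,f₂) is a basis of G. If S' = f₂^[−2] · S · (f₂+g) · (f₂−g) ∈ Υ(G), then g ∈ ⟨f₁⟩. -/
lemma zmultiples_ne_top (m : ℕ) (hm : 2 ≤ m) (e : ZMod m × ZMod m) :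
    AddSubgroup.zmultiples e ≠ ⊤ := by
  intro h
  haveI : Fact (1 < m) := ⟨hm⟩
  have h1 : ((1, 0) : ZMod m × ZMod m) ∈ AddSubgroup.zmultiples e := h ▸ AddSubgroup.mem_top _
  have h2 : ((0, 1) : ZMod m × ZMod m) ∈ AddSubgroup.zmultiples e := h ▸ AddSubgroup.mem_top _
  obtain ⟨a, b⟩ := e
  obtain ⟨k, hk⟩ := AddSubgroup.mem_zmultiples_iff.mp h1
  obtain ⟨l, hl⟩ := AddSubgroup.mem_zmultiples_iff.mp h2
  rw [Prod.smul_mk, Prod.mk.injEq] at hk hl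
  have hk1 : (k : ZMod m) * a = 1 := by rw [← zsmul_eq_mul]; exact hk.1
  have hk2 : (k : ZMod m) * b = 0 := by rw [← zsmul_eq_mul]; exact hk.2
  have hl1 : (l : ZMod m) * a = 0 := by rw [← zsmul_eq_mul]; exact hl.1
  have hl2 : (l : ZMod m) * b = 1 := by rw [← zsmul_eq_mul]; exact hl.2
  have : (1 : ZMod m) = 0 := by
    calc (1 : ZMod m) = ((k : ZMod m) * a) * ((l : ZMod m) * b) := by rw [hk1, hl2, one_mul]
    _ = ((l : ZMod m) * a) * ((k : ZMod m) * b) := by ring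
    _ = 0 := by rw [hl1, zero_mul]
  exact one_ne_zero this

lemma basis_notmem (m : ℕ) (hm : 2 ≤ m) (e₁ e₂ : ZMod m × ZMod m) (h : IsBasis e₁ e₂) :
    e₂ ∉ AddSubgroup.zmultiples e₁ := by
  intro hmem
  apply zmultiples_ne_top m hm e₁
  rw [← h.1]
  rw [sup_eq_left.mpr]
  exact (AddSubgroup.zmultiples_le).mpr hmem

theorem stmt_4 (m : ℕ) (hm : 4 ≤ m) (g f₁ f₂ : ZMod m × ZMod m)
    (hbasis : IsBasis f₁ f₂)
    (S : Multiset (ZMod m × ZMod m))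
    (hS : S = Multiset.replicate (m - 1) f₁ + Multiset.replicate (m - 1) f₂ + {f₁ + f₂})
    (hSNU : S ∈ UpsilonNU m)
    (S' : Multiset (ZMod m × ZMod m))
    (hS' : S' = (S - Multiset.replicate 2 f₂) + {f₂ + g, f₂ - g})
    (hS'U : S' ∈ Upsilon m) :
    g ∈ AddSubgroup.zmultiples f₁ := by
  by_cases hg : g = 0
  · subst hg; exact zero_mem _
  have h2m : 2 ≤ m := by omega
  have hf2 : f₂ ∉ AddSubgroup.zmultiples f₁ := basis_notmem m h2m f₁ f₂ hbasis
  have hf21 : f₂ ≠ f₁ := fun h => hf2 (h ▸ AddSubgroup.mem_zmultiples f₁)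
  have hf1ne0 : f₁ ≠ 0 := by
    intro h
    apply zmultiples_ne_top m h2m f₂
    rw [← hbasis.1, h]
    simp
  -- decomposition of S'
  have hs : S = (Multiset.replicate (m-1) f₁ + Multiset.replicate (m-3) f₂ + {f₁+f₂})
      + Multiset.replicate 2 f₂ := by
    rw [hS]
    nth_rewrite 2 [show m - 1 = m - 3 + 2 from by omega]
    rw [Multiset.replicate_add]
    abel
  have hT : S' = (Multiset.replicate (m-1) f₁ + Multiset.replicate (m-3) f₂ + {f₁+f₂})
      + {f₂ + g, f₂ - g} := by
    rw [hS', hs, add_tsub_cancel_right]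
  have hcount : ∀ a : ZMod m × ZMod m, S'.count a =
      (if a = f₁ then m-1 else 0) + (if a = f₂ then m-3 else 0) +
      (if a = f₁+f₂ then 1 else 0) + (if a = f₂+g then 1 else 0) +
      (if a = f₂-g then 1 else 0) := by
    intro a
    rw [hT]
    simp [Multiset.count_replicate, Multiset.count_singleton, Multiset.count_cons, eq_comm]
    omega
  obtain ⟨e₁, e₂, x, hbe, hxle, hsum, hrep⟩ := hS'U
  have he₂ : e₂ ∉ AddSubgroup.zmultiples e₁ := basis_notmem m h2m e₁ e₂ hbe
  have hce : S'.count e₁ = m - 1 := by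
    rw [hrep, Multiset.count_add, Multiset.count_replicate, if_pos rfl]
    have : e₁ ∉ Multiset.map (fun i => x i • e₁ + e₂) (Finset.univ : Finset (Fin m)).val := by
      rw [Multiset.mem_map]
      rintro ⟨i, -, hi⟩
      apply he₂
      refine AddSubgroup.mem_zmultiples_iff.mpr ⟨1 - (x i : ℤ), ?_⟩
      have h' : e₂ = e₁ - x i • e₁ := eq_sub_of_add_eq' hi
      rw [h', sub_smul, one_smul, natCast_zsmul]
    rw [Multiset.count_eq_zero.mpr this]
    omega
  have hA : ∀ a ∈ S', a ≠ e₁ → a - e₂ ∈ AddSubgroup.zmultiples e₁ := by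
    intro a ha hne
    rw [hrep, Multiset.mem_add] at ha
    rcases ha with h | h
    · exact absurd (Multiset.eq_of_mem_replicate h) hne
    · obtain ⟨i, -, hi⟩ := Multiset.mem_map.mp h
      refine AddSubgroup.mem_zmultiples_iff.mpr ⟨(x i : ℤ), ?_⟩
      rw [natCast_zsmul]
      exact eq_sub_of_add_eq hi
  have hmemf₂ : f₂ ∈ S' := by
    rw [hT]
    refine Multiset.mem_add.mpr (Or.inl (Multiset.mem_add.mpr (Or.inl
      (Multiset.mem_add.mpr (Or.inr ?_)))))
    exact Multiset.mem_replicate.mpr ⟨by omega, rfl⟩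
  have hmemf₂g : f₂ + g ∈ S' := by
    rw [hT]; simp
  by_cases hef : e₁ = f₁
  · subst hef
    have heq := (hcount e₁).symm.trans hce
    rw [if_pos rfl] at heq
    have hne1 : e₁ ≠ f₂ + g := by
      intro h
      rw [if_pos h] at heq
      split_ifs at heq <;> omega
    have h1 := hA f₂ hmemf₂ hf21
    have h2 := hA (f₂ + g) hmemf₂g (fun h => hne1 h.symm)
    have h3 := AddSubgroup.sub_mem _ h2 h1
    have he : (f₂ + g - e₂) - (f₂ - e₂) = g := by abel
    rwa [he] at h3
  · have heq := (hcount e₁).symm.trans hce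
    rw [if_neg hef] at heq
    by_cases hef2 : e₁ = f₂
    · subst hef2
      exfalso
      have n1 : e₁ ≠ f₁ + e₁ := fun h => hf1ne0 (right_eq_add.mp h)
      have n2 : e₁ ≠ e₁ + g := fun h => hg (left_eq_add.mp h)
      have n3 : e₁ ≠ e₁ - g := fun h => hg (by
        have := sub_eq_self.mp h.symm; exact this)
      rw [if_pos rfl, if_neg n1, if_neg n2, if_neg n3] at heq
      omega
    · rw [if_neg hef2] at heq
      have h12 : e₁ = f₁ + f₂ ∧ e₁ = f₂ + g := by
        split_ifs at heq with h1 h2 h3 <;> first | exact ⟨h1, h2⟩ | omega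
      have hgf : g = f₁ := by
        have h := h12.1.symm.trans h12.2
        rw [add_comm f₁ f₂] at h
        exact (add_left_cancel h).symm
      rw [hgf]
      exact AddSubgroup.mem_zmultiples f₁
end

section
/- Let m ≥ 4, let G = (ℤ/mℤ)², let g ∈ G, and let S = f₁^[m−1] · f₂^[m−1] · (f₁+f₂) ∈ Υ_nu(G), where (f₁,f₂) is a basis of G. If S' = f₁^[−1] · f₂^[−1] · S · (f₁+g) · (f₂−g) ∈ Υ(G), then g ∈ {0, −f₁+f₂} and S' = S. -/
theorem stmt_5 (m : ℕ) (hm : 4 ≤ m) (g f₁ f₂ : ZMod m × ZMod m)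
    (hbasis : IsBasis f₁ f₂)
    (S : Multiset (ZMod m × ZMod m))
    (hS : S = Multiset.replicate (m - 1) f₁ + Multiset.replicate (m - 1) f₂ + {f₁ + f₂})
    (hSNU : S ∈ UpsilonNU m)
    (S' : Multiset (ZMod m × ZMod m))
    (hS' : S' = (S - {f₁, f₂}) + {f₁ + g, f₂ - g})
    (hS'U : S' ∈ Upsilon m) :
    (g = 0 ∨ g = -f₁ + f₂) ∧ S' = S := by
  haveI : NeZero m := ⟨by omega⟩
  haveI : Fact (1 < m) := ⟨by omega⟩
  have hsurj : Function.Surjective (fun p : ZMod m × ZMod m => p.1 • f₁ + p.2 • f₂) := by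
    intro x
    have hx : x ∈ AddSubgroup.zmultiples f₁ ⊔ AddSubgroup.zmultiples f₂ := by
      rw [hbasis.1]; trivial
    rw [AddSubgroup.mem_sup] at hx
    obtain ⟨y, hy, z, hz, hyz⟩ := hx
    obtain ⟨k, hk⟩ := AddSubgroup.mem_zmultiples_iff.mp hy
    obtain ⟨l, hl⟩ := AddSubgroup.mem_zmultiples_iff.mp hz
    refine ⟨((k : ZMod m), (l : ZMod m)), ?_⟩
    simp only [Int.cast_smul_eq_zsmul, hk, hl, hyz]
  have hinj := Finite.injective_iff_surjective.mpr hsurj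
  have hindep : ∀ a b : ZMod m, a • f₁ + b • f₂ = 0 → a = 0 ∧ b = 0 := by
    intro a b hab
    have h : ((a, b) : ZMod m × ZMod m) = (0, 0) := hinj (by simpa using hab)
    exact ⟨congrArg Prod.fst h, congrArg Prod.snd h⟩
  have hf1 : f₁ ≠ 0 := by
    intro h
    exact one_ne_zero (hindep 1 0 (by simp [h])).1
  have hf2 : f₂ ≠ 0 := by
    intro h
    exact one_ne_zero (hindep 0 1 (by simp [h])).2
  have hne : f₁ ≠ f₂ := by
    intro h
    exact one_ne_zero (hindep 1 (-1) (by simp [h])).1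
  have hsum0 : f₁ + f₂ ≠ 0 := by
    intro h
    exact one_ne_zero (hindep 1 1 (by simpa using h)).1
  have hle : ({f₁, f₂} : Multiset (ZMod m × ZMod m)) ≤ S := by
    rw [hS]
    have h1 : ({f₁} : Multiset (ZMod m × ZMod m)) ≤ Multiset.replicate (m - 1) f₁ := by
      rw [← Multiset.replicate_one]
      exact (Multiset.replicate_le_replicate f₁).mpr (by omega)
    have h2 : ({f₂} : Multiset (ZMod m × ZMod m)) ≤ Multiset.replicate (m - 1) f₂ := by
      rw [← Multiset.replicate_one]
      exact (Multiset.replicate_le_replicate f₂).mpr (by omega)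
    have h3 : ({f₁, f₂} : Multiset (ZMod m × ZMod m)) = {f₁} + {f₂} := by
      simp [Multiset.insert_eq_cons, Multiset.singleton_add]
    rw [h3]
    exact le_trans (add_le_add h1 h2) (Multiset.le_add_right _ _)
  have hg : g = 0 ∨ g = -f₁ + f₂ := by
    by_contra hcon
    push_neg at hcon
    obtain ⟨hg0, hg1⟩ := hcon
    obtain ⟨e₁, e₂, x, hb, hx, hxsum, hSe⟩ := hS'U
    have hcount : m - 1 ≤ S'.count e₁ := by
      rw [hSe]
      simp only [Multiset.count_add, Multiset.count_replicate, if_pos rfl]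
      exact Nat.le_add_right _ _
    rw [hS', hS] at hcount
    simp only [Multiset.count_add, Multiset.count_sub, Multiset.count_replicate,
      Multiset.insert_eq_cons, Multiset.count_cons, Multiset.count_singleton] at hcount
    have key1 : f₁ ≠ f₁ + g := fun h => hg0 (left_eq_add.mp h)
    have key2 : f₁ ≠ f₂ - g := by
      intro h
      apply hg1
      have h2 : f₁ + g = f₂ := by rw [h]; abel
      rw [← h2]; abel
    have key3 : f₂ ≠ f₁ + g := by
      intro h
      apply hg1
      rw [h]; abel
    have key4 : f₂ ≠ f₂ - g := fun h => hg0 (add_eq_left.mp (eq_sub_iff_add_eq.mp h))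
    have key5 : f₁ ≠ f₁ + f₂ := fun h => hf2 (left_eq_add.mp h)
    have key6 : f₂ ≠ f₁ + f₂ := fun h => hf1 (right_eq_add.mp h)
    rcases eq_or_ne e₁ f₁ with h1 | h1
    · subst h1
      simp only [if_neg (Ne.symm hne), if_neg key5, if_neg key1, if_neg key2, if_neg hne,
        if_pos rfl, if_true, eq_self_iff_true] at hcount
      omega
    rcases eq_or_ne e₁ f₂ with h2 | h2
    · subst h2
      simp only [if_neg hne, if_neg key6, if_neg key3, if_neg key4, if_neg (Ne.symm hne),
        if_pos rfl, if_true, eq_self_iff_true] at hcount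
      omega
    rw [if_neg (fun h => h1 h.symm), if_neg (fun h => h2 h.symm), if_neg h1, if_neg h2] at hcount
    have h3 : e₁ = f₁ + f₂ := by
      by_contra hc
      rw [if_neg hc] at hcount
      split_ifs at hcount <;> omega
    have h4 : e₁ = f₁ + g := by
      by_contra hc
      rw [if_neg hc] at hcount
      split_ifs at hcount <;> omega
    have h5 : e₁ = f₂ - g := by
      by_contra hc
      rw [if_neg hc] at hcount
      split_ifs at hcount <;> omega
    have hgf : g = f₂ := (add_left_cancel (h3.symm.trans h4)).symm
    rw [hgf] at h5
    simp only [sub_self] at h5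
    exact hsum0 (h5.symm.trans h3).symm
  refine ⟨hg, ?_⟩
  rcases hg with h | h
  · subst h
    rw [hS']
    have hp : ({f₁ + 0, f₂ - 0} : Multiset (ZMod m × ZMod m)) = {f₁, f₂} := by norm_num
    rw [hp]
    exact tsub_add_cancel_of_le hle
  · subst h
    rw [hS']
    have e1 : f₁ + (-f₁ + f₂) = f₂ := by abel
    have e2 : f₂ - (-f₁ + f₂) = f₁ := by abel
    rw [e1, e2]
    have hp : ({f₂, f₁} : Multiset (ZMod m × ZMod m)) = {f₁, f₂} := by
      simp only [Multiset.insert_eq_cons]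
      exact Multiset.cons_swap f₂ f₁ {}
    rw [hp]
    exact tsub_add_cancel_of_le hle
end

section
/- Let m ≥ 4, let G = (ℤ/mℤ)², let g ∈ G, and let S = f₁^[m−1] · f₂^[m−1] · (f₁+f₂) ∈ Υ_nu(G), where (f₁,f₂) is a basis of G. If S' = f₁^[−1] · (f₁+f₂)^[−1] · S · (f₁+g) · (f₁+f₂−g) ∈ Υ(G), then g ∈ ⟨f₂⟩. -/
lemma zmult_ne_top (m : ℕ) (hm : 2 ≤ m) (a : ZMod m × ZMod m) :
    AddSubgroup.zmultiples a ≠ ⊤ := by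
  intro h
  have h1 : Nat.card (AddSubgroup.zmultiples a) = addOrderOf a := Nat.card_zmultiples a
  have h2 : addOrderOf a ∣ m := addOrderOf_dvd_of_nsmul_eq_zero (by
    ext <;> simp [nsmul_eq_mul, ZMod.natCast_self])
  have h3 : Nat.card (ZMod m × ZMod m) = m * m := by simp [Nat.card_zmod]
  rw [h, AddSubgroup.card_top, h3] at h1
  have := Nat.le_of_dvd (by omega) h2
  nlinarith

lemma notMem_zmult (m : ℕ) (hm : 2 ≤ m) (e₁ e₂ : ZMod m × ZMod m)
    (h : AddSubgroup.zmultiples e₁ ⊔ AddSubgroup.zmultiples e₂ = ⊤) :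
    e₂ ∉ AddSubgroup.zmultiples e₁ ∧ e₁ ∉ AddSubgroup.zmultiples e₂ := by
  constructor
  · intro hmem
    refine zmult_ne_top m hm e₁ (top_le_iff.mp ?_)
    rw [← h]
    exact sup_le le_rfl ((AddSubgroup.zmultiples_le).mpr hmem)
  · intro hmem
    refine zmult_ne_top m hm e₂ (top_le_iff.mp ?_)
    rw [← h]
    exact sup_le ((AddSubgroup.zmultiples_le).mpr hmem) le_rfl

lemma count_add_count_le {α : Type*} [DecidableEq α] (a b : α) (hab : a ≠ b)
    (M : Multiset α) : M.count a + M.count b ≤ Multiset.card M := by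
  induction M using Multiset.induction_on with
  | empty => simp
  | cons c s ih =>
    rw [Multiset.count_cons, Multiset.count_cons, Multiset.card_cons]
    split_ifs with h1 h2
    · exact absurd (h1.trans h2.symm) hab
    · omega
    · omega
    · omega

theorem stmt_6 (m : ℕ) (hm : 4 ≤ m) (g f₁ f₂ : ZMod m × ZMod m)
    (hbasis : IsBasis f₁ f₂)
    (S : Multiset (ZMod m × ZMod m))
    (hS : S = Multiset.replicate (m - 1) f₁ + Multiset.replicate (m - 1) f₂ + {f₁ + f₂})
    (hSNU : S ∈ UpsilonNU m)
    (S' : Multiset (ZMod m × ZMod m))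
    (hS' : S' = (S - {f₁, f₁ + f₂}) + {f₁ + g, f₁ + f₂ - g})
    (hS'U : S' ∈ Upsilon m) :
    g ∈ AddSubgroup.zmultiples f₂ := by
  obtain ⟨hsup, hinf⟩ := hbasis
  have hne := notMem_zmult m (by omega) f₁ f₂ hsup
  have hf12 : f₁ ≠ f₂ := by
    intro h; exact hne.1 (h ▸ AddSubgroup.mem_zmultiples f₁)
  have hadd : S = (Multiset.replicate (m - 2) f₁ + Multiset.replicate (m - 1) f₂) +
      {f₁, f₁ + f₂} := by
    have h21 : Multiset.replicate (m - 1) f₁ = Multiset.replicate (m - 2) f₁ + {f₁} := by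
      rw [← Multiset.replicate_one, ← Multiset.replicate_add]
      congr 1
      omega
    rw [hS, h21, Multiset.insert_eq_cons, ← Multiset.singleton_add]
    abel
  have hsplit : S - {f₁, f₁ + f₂} =
      Multiset.replicate (m - 2) f₁ + Multiset.replicate (m - 1) f₂ := by
    rw [hadd]
    exact add_tsub_cancel_right _ _
  have hS'2 : S' = Multiset.replicate (m - 2) f₁ + Multiset.replicate (m - 1) f₂ +
      {f₁ + g, f₁ + f₂ - g} := by rw [hS', hsplit]
  have hcount : ∀ a, S'.count a =
      ((if f₁ = a then m - 2 else 0) + (if f₂ = a then m - 1 else 0)) +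
      ((if a = f₁ + f₂ - g then 1 else 0) + (if a = f₁ + g then 1 else 0)) := by
    intro a
    rw [hS'2]
    simp only [Multiset.count_add, Multiset.count_replicate,
      Multiset.insert_eq_cons, Multiset.count_cons, Multiset.count_singleton]
  obtain ⟨e₁, e₂, x, ⟨hesup, heinf⟩, hxle, hxsum, hrep⟩ := hS'U
  have hnee := notMem_zmult m (by omega) e₁ e₂ hesup
  set M : Multiset (ZMod m × ZMod m) :=
    Multiset.map (fun i => x i • e₁ + e₂) (Finset.univ : Finset (Fin m)).val with hM
  have hMcard : Multiset.card M = m := by simp [hM]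
  have hmapne : ∀ a ∈ M, a ≠ e₁ := by
    rintro a ha rfl
    obtain ⟨i, -, hi⟩ := Multiset.mem_map.mp ha
    have he2 : e₂ = a - x i • a := eq_sub_of_add_eq' hi
    have key : (1 - (x i : ℤ)) • a = e₂ := by
      rw [sub_zsmul, one_zsmul, natCast_zsmul, he2, sub_eq_add_neg]
    exact hnee.1 (AddSubgroup.mem_zmultiples_iff.mpr ⟨_, key⟩)
  have he1count : S'.count e₁ = m - 1 := by
    rw [hrep, Multiset.count_add, Multiset.count_replicate, if_pos rfl,
      Multiset.count_eq_zero.mpr (fun h => hmapne e₁ h rfl), add_zero]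
  have hmapcount : ∀ a, a ≠ e₁ → S'.count a = M.count a := by
    intro a ha
    rw [hrep, Multiset.count_add, Multiset.count_replicate, if_neg (Ne.symm ha), zero_add]
  by_cases h1 : e₁ = f₁
  · have hc := he1count
    rw [h1, hcount f₁, if_pos rfl, if_neg (Ne.symm hf12)] at hc
    by_cases hg0 : f₁ = f₁ + g
    · have hg : g = 0 := (left_eq_add.mp hg0)
      rw [hg]; exact zero_mem _
    · rw [if_neg hg0] at hc
      have hg2 : f₁ = f₁ + f₂ - g := by
        by_contra hh; rw [if_neg hh] at hc; omega
      have hgf : f₂ = g := add_left_cancel (sub_eq_iff_eq_add.mp hg2.symm)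
      rw [← hgf]
      exact AddSubgroup.mem_zmultiples f₂
  · by_cases h2 : e₁ = f₂
    · have hc := he1count
      rw [h2, hcount f₂, if_neg hf12, if_pos rfl] at hc
      have hgne : f₂ ≠ f₁ + g := by
        intro hh; rw [if_pos hh] at hc
        by_cases hh2 : f₂ = f₁ + f₂ - g
        · rw [if_pos hh2] at hc; omega
        · rw [if_neg hh2] at hc; omega
      have hf1mem : f₁ ∈ M := by
        have h0 : 0 < S'.count f₁ := by
          rw [hcount f₁, if_pos rfl]; omega
        have h0' := Multiset.count_pos.mp h0
        rw [hrep] at h0'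
        rcases Multiset.mem_add.mp h0' with h | h
        · exact absurd ((Multiset.eq_of_mem_replicate h).trans h2) hf12
        · exact h
      have hfg1mem : f₁ + g ∈ M := by
        have h0 : 0 < S'.count (f₁ + g) := by
          rw [hcount (f₁ + g)]
          have : (if f₁ + g = f₁ + g then 1 else 0) = 1 := if_pos rfl
          omega
        have h0' := Multiset.count_pos.mp h0
        rw [hrep] at h0'
        rcases Multiset.mem_add.mp h0' with h | h
        · exact absurd ((Multiset.eq_of_mem_replicate h).trans h2).symm hgne
        · exact h
      obtain ⟨i, -, hi⟩ := Multiset.mem_map.mp hf1mem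
      obtain ⟨j, -, hj⟩ := Multiset.mem_map.mp hfg1mem
      rw [h2] at hi hj
      have hgv : ((x j : ℤ) - (x i : ℤ)) • f₂ = g := by
        rw [sub_zsmul, natCast_zsmul, natCast_zsmul]
        have : g = (x j • f₂ + e₂) - (x i • f₂ + e₂) := by rw [hi, hj]; abel
        rw [this]
        abel
      exact AddSubgroup.mem_zmultiples_iff.mpr ⟨_, hgv⟩
    · exfalso
      have hb := count_add_count_le f₁ f₂ hf12 M
      rw [← hmapcount f₁ (fun hh => h1 hh.symm),
        ← hmapcount f₂ (fun hh => h2 hh.symm), hMcard] at hb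
      have c1 : m - 2 ≤ S'.count f₁ := by rw [hcount f₁, if_pos rfl]; omega
      have c2 : m - 1 ≤ S'.count f₂ := by
        rw [hcount f₂, if_neg hf12, if_pos rfl]; omega
      omega
end

section
/- Let m ≥ 4, let G = (ℤ/mℤ)², let g ∈ G, and let S = f₁^[m−1] · f₂^[m−1] · (f₁+f₂) ∈ Υ_nu(G), where (f₁,f₂) is a basis of G. If S' = f₂^[−2] · S · (f₂+g) · (f₂−g) ∈ Υ_nu(G), then g = 0 and S' = S. -/
private lemma basis_li {m : ℕ} (hm : 4 ≤ m) {e₁ e₂ : ZMod m × ZMod m}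
    (h : IsBasis e₁ e₂) (a b : ZMod m) (hab : a • e₁ + b • e₂ = 0) :
    a = 0 ∧ b = 0 := by
  haveI : NeZero m := ⟨by omega⟩
  set φ : ZMod m × ZMod m → ZMod m × ZMod m := fun p => p.1 • e₁ + p.2 • e₂ with hφ
  have hsurj : Function.Surjective φ := by
    intro x
    have hx : x ∈ AddSubgroup.zmultiples e₁ ⊔ AddSubgroup.zmultiples e₂ := by
      rw [h.1]; trivial
    obtain ⟨y, hy, z, hz, rfl⟩ := AddSubgroup.mem_sup.mp hx
    obtain ⟨k, rfl⟩ := AddSubgroup.mem_zmultiples_iff.mp hy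
    obtain ⟨l, rfl⟩ := AddSubgroup.mem_zmultiples_iff.mp hz
    exact ⟨((k : ZMod m), (l : ZMod m)), by
      simp [hφ, Int.cast_smul_eq_zsmul]⟩
  have hinj : Function.Injective φ := Finite.injective_iff_surjective.mpr hsurj
  have h0 : φ (a, b) = φ (0, 0) := by simp [hφ, hab]
  have := hinj h0
  exact ⟨congrArg Prod.fst this, congrArg Prod.snd this⟩

private lemma basis_facts {m : ℕ} (hm : 4 ≤ m) {e₁ e₂ : ZMod m × ZMod m}
    (h : IsBasis e₁ e₂) :
    e₁ ≠ e₂ ∧ e₁ ≠ e₁ + e₂ ∧ e₂ ≠ e₁ + e₂ ∧ e₁ + e₁ ≠ 0 := by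
  haveI : NeZero m := ⟨by omega⟩
  have h1 : (1 : ZMod m) ≠ 0 := by
    have : ((1 : ℕ) : ZMod m) ≠ 0 := by
      rw [Ne, ZMod.natCast_eq_zero_iff]
      intro hd
      have := Nat.le_of_dvd one_pos hd
      omega
    simpa using this
  have h2 : (2 : ZMod m) ≠ 0 := by
    have : ((2 : ℕ) : ZMod m) ≠ 0 := by
      rw [Ne, ZMod.natCast_eq_zero_iff]
      intro hd
      have := Nat.le_of_dvd (by norm_num) hd
      omega
    simpa using this
  refine ⟨?_, ?_, ?_, ?_⟩
  · intro he
    have := basis_li hm h 1 (-1) (by rw [he]; simp)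
    exact h1 this.1
  · intro he
    have he2 : e₂ = 0 := by linear_combination -he
    have := basis_li hm h 0 1 (by simp [he2])
    exact h1 this.2
  · intro he
    have he1 : e₁ = 0 := by linear_combination -he
    have := basis_li hm h 1 0 (by simp [he1])
    exact h1 this.1
  · intro he
    have := basis_li hm h 2 0 (by rw [two_smul, zero_smul, add_zero]; exact he)
    exact h2 this.1
theorem stmt_9 (m : ℕ) (hm : 4 ≤ m) (g f₁ f₂ : ZMod m × ZMod m)
    (hbasis : IsBasis f₁ f₂)
    (S : Multiset (ZMod m × ZMod m))
    (hS : S = Multiset.replicate (m - 1) f₁ + Multiset.replicate (m - 1) f₂ + {f₁ + f₂})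
    (hSNU : S ∈ UpsilonNU m)
    (S' : Multiset (ZMod m × ZMod m))
    (hS' : S' = (S - Multiset.replicate 2 f₂) + {f₂ + g, f₂ - g})
    (hS'U : S' ∈ UpsilonNU m) :
    g = 0 ∧ S' = S := by
  obtain ⟨hf12, hf1s, hf2s, h2f1⟩ := basis_facts hm hbasis
  obtain ⟨e₁, e₂, hbe, hT⟩ := hS'U
  obtain ⟨he12, he1s, he2s, -⟩ := basis_facts hm hbe
  have hcnt : ∀ x, S'.count x =
      (if e₁ = x then m - 1 else 0) + (if e₂ = x then m - 1 else 0) +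
        (if x = e₁ + e₂ then 1 else 0) := by
    intro x
    rw [hT]
    simp only [Multiset.count_add, Multiset.count_replicate, Multiset.count_singleton]
  have hcnt' : ∀ x, S'.count x =
      ((if f₁ = x then m - 1 else 0) + (if f₂ = x then m - 1 else 0) +
        (if x = f₁ + f₂ then 1 else 0) - (if f₂ = x then 2 else 0)) +
      ((if x = f₂ + g then 1 else 0) + (if x = f₂ - g then 1 else 0)) := by
    intro x
    rw [hS', Multiset.count_add, Multiset.count_sub, hS]
    simp only [Multiset.count_add, Multiset.count_replicate, Multiset.count_singleton,
      Multiset.insert_eq_cons, Multiset.count_cons]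
    split_ifs <;> omega
  have hdisj : ∀ x, S'.count x = 0 ∨ S'.count x = 1 ∨ S'.count x = m - 1 := by
    intro x
    have hx := hcnt x
    split_ifs at hx <;>
      first
        | omega
        | exact absurd (Eq.trans ‹e₁ = x› (Eq.symm ‹e₂ = x›)) he12
        | exact absurd (Eq.trans ‹e₁ = x› ‹x = e₁ + e₂›) he1s
        | exact absurd (Eq.trans ‹e₂ = x› ‹x = e₁ + e₂›) he2s
  have hone : ∀ x, S'.count x = 1 → x = e₁ + e₂ := by
    intro x h1
    have hx := hcnt x
    split_ifs at hx <;>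
      first
        | assumption
        | omega
        | exact absurd (Eq.trans ‹e₁ = x› (Eq.symm ‹e₂ = x›)) he12
        | exact absurd (Eq.trans ‹e₁ = x› ‹x = e₁ + e₂›) he1s
        | exact absurd (Eq.trans ‹e₂ = x› ‹x = e₁ + e₂›) he2s
  have hf21 : f₂ ≠ f₁ := Ne.symm hf12
  have hg0 : g = 0 := by
    by_contra hg
    have hB1 : f₂ ≠ f₂ + g := fun hB => hg (by linear_combination -hB)
    have hB2 : f₂ ≠ f₂ - g := fun hB => hg (by linear_combination hB)
    have hA1 : f₁ ≠ f₂ + g := by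
      intro hA
      have hx := hcnt' f₁
      simp only [eq_self_iff_true, if_true] at hx
      have hd := hdisj f₁
      split_ifs at hx <;> first | contradiction | omega
    have hA2 : f₁ ≠ f₂ - g := by
      intro hA
      have hx := hcnt' f₁
      simp only [eq_self_iff_true, if_true] at hx
      have hd := hdisj f₁
      split_ifs at hx <;> first | contradiction | omega
    have hm4 : m = 4 := by
      have hx := hcnt' f₂
      simp only [eq_self_iff_true, if_true] at hx
      have hd := hdisj f₂
      split_ifs at hx <;> first | contradiction | omega
    have hp5 : f₂ + g = f₁ + f₂ := by
      by_contra hp5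
      have hp5' : f₁ + f₂ ≠ f₂ + g := fun h => hp5 h.symm
      have h1 : S'.count (f₂ + g) = 1 := by
        have hx := hcnt' (f₂ + g)
        simp only [eq_self_iff_true, if_true] at hx
        have hd := hdisj (f₂ + g)
        split_ifs at hx <;> first | contradiction | omega
      have h2 : S'.count (f₁ + f₂) = 1 := by
        have hx := hcnt' (f₁ + f₂)
        simp only [eq_self_iff_true, if_true] at hx
        have hd := hdisj (f₁ + f₂)
        split_ifs at hx <;> first | contradiction | omega
      exact hp5 ((hone _ h1).trans (hone _ h2).symm)
    have hp6 : f₂ - g ≠ f₁ + f₂ := by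
      intro h6
      exact h2f1 (by linear_combination -hp5 - h6)
    have hp5'' : f₁ + f₂ = f₂ + g := hp5.symm
    have hp6' : f₁ + f₂ ≠ f₂ - g := fun h => hp6 h.symm
    have hx := hcnt' (f₁ + f₂)
    simp only [eq_self_iff_true, if_true] at hx
    have hd := hdisj (f₁ + f₂)
    split_ifs at hx <;> first | contradiction | omega
  subst hg0
  refine ⟨rfl, ?_⟩
  rw [hS']
  have hrep : Multiset.replicate 2 f₂ ≤ S := by
    rw [hS]
    refine le_trans (Multiset.replicate_mono f₂ (by omega : 2 ≤ m - 1)) ?_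
    exact le_trans (Multiset.le_add_left _ _) (Multiset.le_add_right _ _)
  have hpair : ({f₂ + 0, f₂ - 0} : Multiset (ZMod m × ZMod m)) = Multiset.replicate 2 f₂ := by
    rw [add_zero, sub_zero]
    rfl
  rw [hpair, tsub_add_cancel_of_le hrep]
end

section
/- Let n ≥ 2, let G = (ℤ/nℤ)², and let S be a minimal zero-sum sequence over G of length |S| = 2n − 1 containing a term e₁ with multiplicity at least n − 1. Then there exists e₂ ∈ G such that (e₁,e₂) is a basis of G and S = e₁^[n−1] · ∏_{i=1}^{n}(x_i e₁ + e₂) for some x₁,…,x_n ∈ [0,n−1] with x₁ + … + x_n ≡ 1 (mod n). -/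
open Multiset AddSubgroup

/-- If two partial sums of a list enumerating `T` agree mod `H`, the segment between them is
a nonempty proper zero-sum-mod-`H` subsequence; contradiction with minimality. -/
lemma seg_aux {G : Type*} [AddCommGroup G] (H : AddSubgroup G) (T : Multiset G) (n : ℕ)
    (hmin : ∀ T' ≤ T, T' ≠ 0 → T'.sum ∈ H → T' = T)
    (l : List G) (hl : (l : Multiset G) = T) (hlen : l.length = n)
    {i j : ℕ} (hij : i < j) (hjn : j < n)
    (h : (((l.take i).sum : G) : G ⧸ H) = (((l.take j).sum : G) : G ⧸ H)) : False := by
  have hTcard : Multiset.card T = n := by rw [← hl]; simpa using hlen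
  set seg := (l.take j).drop i with hseg
  have hsplit : l.take j = l.take i ++ seg := by
    conv_lhs => rw [← List.take_append_drop i (l.take j)]
    rw [List.take_take, min_eq_left hij.le]
  have hsum : (l.take j).sum = (l.take i).sum + seg.sum := by
    rw [hsplit, List.sum_append]
  have hseg0 : ((seg.sum : G) : G ⧸ H) = 0 := by
    rw [hsum, QuotientAddGroup.mk_add] at h
    exact (left_eq_add.mp h)
  have hsegH : seg.sum ∈ H := (QuotientAddGroup.eq_zero_iff _).mp hseg0
  have hsub : List.Sublist seg l := (List.drop_sublist i (l.take j)).trans (List.take_sublist j l)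
  have hle : (seg : Multiset G) ≤ T := by rw [← hl]; exact hsub.subperm
  have hlenseg : seg.length = j - i := by
    rw [hseg, List.length_drop, List.length_take, min_eq_left (by omega : j ≤ l.length)]
  have hne : (seg : Multiset G) ≠ 0 := by
    rw [Ne, Multiset.coe_eq_zero, ← List.length_eq_zero_iff]
    omega
  have := hmin _ hle hne hsegH
  have : Multiset.card (seg : Multiset G) = n := by rw [this, hTcard]
  simp only [Multiset.coe_card] at this
  omega

/-- All terms of `T` are congruent modulo `H`. -/
lemma all_cong {G : Type*} [AddCommGroup G] (H : AddSubgroup G) (T : Multiset G) (n : ℕ)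
    (hn : 2 ≤ n) (hQ : Nat.card (G ⧸ H) = n) (hcard : Multiset.card T = n)
    (hmin : ∀ T' ≤ T, T' ≠ 0 → T'.sum ∈ H → T' = T) :
    ∀ a ∈ T, ∀ b ∈ T, ((a : G ⧸ H) = (b : G ⧸ H)) := by
  classical
  haveI : Finite (G ⧸ H) := Nat.finite_of_card_ne_zero (by omega)
  haveI : Fintype (G ⧸ H) := Fintype.ofFinite _
  intro a ha b hb
  by_cases hab : a = b
  · rw [hab]
  have hb' : b ∈ T.erase a := (Multiset.mem_erase_of_ne (fun h => hab h.symm)).mpr hb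
  set R := (T.erase a).erase b with hR
  have hT1 : T = a ::ₘ b ::ₘ R := by
    rw [hR, Multiset.cons_erase hb', Multiset.cons_erase ha]
  set r := R.toList with hrdef
  have hrcoe : (r : Multiset G) = R := Multiset.coe_toList R
  have hrlen : r.length + 2 = n := by
    have h1 := congrArg Multiset.card hT1
    simp only [Multiset.card_cons] at h1
    have : Multiset.card R = r.length := by rw [← hrcoe]; simp
    omega
  set L₁ : List G := a :: b :: r with hL₁def
  set L₂ : List G := b :: a :: r with hL₂def
  have hL₁ : (L₁ : Multiset G) = T := by
    show ((a :: b :: r : List G) : Multiset G) = T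
    rw [hT1, ← hrcoe]; rfl
  have hL₂ : (L₂ : Multiset G) = T := by
    show ((b :: a :: r : List G) : Multiset G) = T
    rw [hT1, ← hrcoe, Multiset.cons_swap]; rfl
  have hL₁len : L₁.length = n := by simp [hL₁def]; omega
  have hL₂len : L₂.length = n := by simp [hL₂def]; omega
  -- the partial sums of L₁ form all of G ⧸ H
  set f : ℕ → G ⧸ H := fun i => (((L₁.take i).sum : G) : G ⧸ H) with hf
  have hinj : Set.InjOn f (Finset.range n) := by
    intro i hi j hj hEq
    simp only [Finset.coe_sort_coe, Finset.mem_coe, Finset.mem_range] at hi hj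
    by_contra hne
    rcases Nat.lt_or_ge i j with hlt | hge
    · exact seg_aux H T n hmin L₁ hL₁ hL₁len hlt hj hEq
    · have hlt : j < i := by omega
      exact seg_aux H T n hmin L₁ hL₁ hL₁len hlt hi hEq.symm
  set F : Finset (G ⧸ H) := (Finset.range n).image f with hF
  have hFcard : F.card = n := by
    rw [hF, Finset.card_image_of_injOn hinj, Finset.card_range]
  have hFuniv : F = Finset.univ :=
    Finset.eq_univ_of_card _ (by rw [hFcard, ← hQ, Nat.card_eq_fintype_card])
  have hbF : ((b : G ⧸ H)) ∈ F := hFuniv ▸ Finset.mem_univ _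
  obtain ⟨i, hi, hieq⟩ := Finset.mem_image.mp hbF
  rw [Finset.mem_range] at hi
  rcases i with _ | _ | k
  ·
    -- b ∈ H : then {b} is a zero-sum subsequence
    exfalso
    have hbH : b ∈ H := by
      have h0 : ((b : G) : G ⧸ H) = 0 := by rw [← hieq]; simp [hf]
      exact (QuotientAddGroup.eq_zero_iff b).mp h0
    have hsing : ({b} : Multiset G) ≤ T := Multiset.singleton_le.mpr hb
    have := hmin _ hsing (by simp) (by simpa using hbH)
    have := congrArg Multiset.card this
    simp [hcard] at this
    omega
  ·
    rw [← hieq]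
    simp [hf, hL₁def]
  ·
    exfalso
    simp only [hf] at hieq
    have htake₁ : L₁.take (k+1+1) = a :: b :: r.take k := by simp [hL₁def]
    have htake₂ : L₂.take (k+1+1) = b :: a :: r.take k := by simp [hL₂def]
    have h1 : (((L₂.take 1).sum : G) : G ⧸ H) = (((L₂.take (k+1+1)).sum : G) : G ⧸ H) := by
      have hs1 : (L₂.take 1).sum = b := by simp [hL₂def]
      have hsums : (L₂.take (k+1+1)).sum = (L₁.take (k+1+1)).sum := by
        rw [htake₁, htake₂]; simp [add_left_comm]
      rw [hs1, hsums, hieq]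
    exact seg_aux H T n hmin L₂ hL₂ hL₂len (by omega : 1 < k+1+1) hi h1


/-- A minimal zero-sum sequence: a nontrivial zero-sum sequence that cannot be factored
into two proper nontrivial zero-sum subsequences (equivalently, its only zero-sum
subsequences are the trivial one and itself). -/
def IsMinZeroSum {G : Type*} [AddCommGroup G] (S : Multiset G) : Prop :=
  S ≠ 0 ∧ S.sum = 0 ∧ ∀ T ≤ S, T.sum = 0 → T = 0 ∨ T = S

/-- `Σ_{≤ k}(S)`: sums of nonempty subsequences of `S` of length at most `k`. -/
def SigmaLe {G : Type*} [AddCommGroup G] (k : ℕ) (S : Multiset G) : Set G :=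
  { g | ∃ T ≤ S, T ≠ 0 ∧ Multiset.card T ≤ k ∧ T.sum = g }

/-- Property B for `(ℤ/nℤ)²`: every minimal zero-sum sequence of length `2n - 1` has the
form `e₁^[n-1] · ∏_{i=1}^n (xᵢe₁ + e₂)` for some basis `(e₁, e₂)` and
`x₁, …, x_n ∈ [0, n-1]` with `x₁ + ⋯ + x_n ≡ 1 (mod n)`. -/
def PropertyB (n : ℕ) : Prop :=
  ∀ S : Multiset (ZMod n × ZMod n), IsMinZeroSum S → Multiset.card S = 2 * n - 1 →
    ∃ (e₁ e₂ : ZMod n × ZMod n) (x : Fin n → ℕ),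
      IsBasis e₁ e₂ ∧ (∀ i, x i ≤ n - 1) ∧ (∑ i, x i) % n = 1 % n ∧
      S = Multiset.replicate (n - 1) e₁ +
          Multiset.map (fun i => x i • e₁ + e₂) (Finset.univ : Finset (Fin n)).val

theorem stmt_17 (n : ℕ) (hn : 2 ≤ n)
    (S : Multiset (ZMod n × ZMod n))
    (hmin : IsMinZeroSum S) (hcard : Multiset.card S = 2 * n - 1)
    (e₁ : ZMod n × ZMod n) (he₁ : n - 1 ≤ S.count e₁) :
    ∃ (e₂ : ZMod n × ZMod n) (x : Fin n → ℕ),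
      IsBasis e₁ e₂ ∧ (∀ i, x i ≤ n - 1) ∧ (∑ i, x i) % n = 1 % n ∧
      S = Multiset.replicate (n - 1) e₁ +
          Multiset.map (fun i => x i • e₁ + e₂) (Finset.univ : Finset (Fin n)).val := by

  classical
  obtain ⟨hS0, hSsum, hSmin⟩ := hmin
  haveI : NeZero n := ⟨by omega⟩
  -- every element killed by n
  have hns : ∀ g : ZMod n × ZMod n, n • g = 0 := by
    intro g
    ext
    · show n • g.1 = (0 : ZMod n)
      rw [nsmul_eq_mul]; simp
    · show n • g.2 = (0 : ZMod n)
      rw [nsmul_eq_mul]; simp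
  -- the order of e₁ is n
  have horde : addOrderOf e₁ = n := by
    have hdvd : addOrderOf e₁ ∣ n := addOrderOf_dvd_of_nsmul_eq_zero (hns e₁)
    by_contra hne
    have hlt : addOrderOf e₁ ≤ n - 1 := by
      have := Nat.le_of_dvd (by omega) hdvd
      omega
    have hpos : 0 < addOrderOf e₁ := addOrderOf_pos e₁
    have hrep : Multiset.replicate (addOrderOf e₁) e₁ ≤ S :=
      Multiset.le_count_iff_replicate_le.mp (by omega)
    have hsum0 : (Multiset.replicate (addOrderOf e₁) e₁).sum = 0 := by
      rw [Multiset.sum_replicate]; exact addOrderOf_nsmul_eq_zero e₁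
    rcases hSmin _ hrep hsum0 with h | h
    · have := congrArg Multiset.card h; simp only [Multiset.card_replicate, Multiset.card_zero] at this; omega
    · have := congrArg Multiset.card h; simp [hcard] at this; omega
  -- multiplicity of e₁ is exactly n - 1
  have hcount : S.count e₁ = n - 1 := by
    by_contra hne
    have hge : n ≤ S.count e₁ := by omega
    have hrep : Multiset.replicate n e₁ ≤ S := Multiset.le_count_iff_replicate_le.mp hge
    have hsum0 : (Multiset.replicate n e₁).sum = 0 := by
      rw [Multiset.sum_replicate]; exact hns e₁
    rcases hSmin _ hrep hsum0 with h | h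
    · have := congrArg Multiset.card h; simp at this; omega
    · have := congrArg Multiset.card h; simp [hcard] at this; omega
  have hrepS : Multiset.replicate (n-1) e₁ ≤ S := Multiset.le_count_iff_replicate_le.mp (by omega)
  set T : Multiset (ZMod n × ZMod n) := S - Multiset.replicate (n-1) e₁ with hTdef
  have hST : S = Multiset.replicate (n-1) e₁ + T := (add_tsub_cancel_of_le hrepS).symm
  have hTcard : Multiset.card T = n := by
    have := congrArg Multiset.card hST
    simp [hcard] at this
    omega
  have hn1 : (n - 1) • e₁ + e₁ = 0 := by
    rw [← succ_nsmul, show n - 1 + 1 = n by omega]; exact hns e₁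
  have hTsum : T.sum = e₁ := by
    have h1 : (n-1) • e₁ + T.sum = 0 := by
      rw [← Multiset.sum_replicate, ← Multiset.sum_add, ← hST]; exact hSsum
    calc T.sum = ((n-1) • e₁ + e₁) + T.sum := by rw [hn1, zero_add]
    _ = ((n-1) • e₁ + T.sum) + e₁ := by abel
    _ = e₁ := by rw [h1, zero_add]
  set H := AddSubgroup.zmultiples e₁ with hHdef
  -- zsmul kill lemma
  have hz : ∀ z : ℤ, ((n:ℤ) ∣ z) → z • e₁ = 0 := by
    intro z hzd
    have : (addOrderOf e₁ : ℤ) ∣ z := by rw [horde]; exact_mod_cast hzd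
    exact addOrderOf_dvd_iff_zsmul_eq_zero.mp this
  -- the key minimality property of T modulo H
  have key : ∀ T' ≤ T, T' ≠ 0 → T'.sum ∈ H → T' = T := by
    intro T' hle hne hmem
    obtain ⟨z, hzeq⟩ := AddSubgroup.mem_zmultiples_iff.mp hmem
    set k : ℕ := ((-z) % (n:ℤ)).toNat with hkdef
    have hnpos : (0:ℤ) < (n:ℤ) := by exact_mod_cast (by omega : 0 < n)
    have hkb : ((-z) % (n:ℤ)) < n := Int.emod_lt_of_pos _ hnpos
    have hk0 : (0:ℤ) ≤ (-z) % (n:ℤ) := Int.emod_nonneg _ (by omega)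
    have hkn : k ≤ n - 1 := by omega
    have hkz : (k : ℤ) = (-z) % (n:ℤ) := Int.toNat_of_nonneg hk0
    have hdvd : (n:ℤ) ∣ ((k:ℤ) + z) := by
      rw [hkz]
      have := Int.emod_add_mul_ediv (-z) (n:ℤ)
      exact ⟨-((-z)/(n:ℤ)), by linarith⟩
    have hsum0 : (Multiset.replicate k e₁ + T').sum = 0 := by
      rw [Multiset.sum_add, Multiset.sum_replicate, ← hzeq]
      have h2 : ((k:ℤ) + z) • e₁ = 0 := hz _ hdvd
      rw [add_zsmul] at h2
      rw [← natCast_zsmul]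
      exact h2
    have hUle : Multiset.replicate k e₁ + T' ≤ S := by
      rw [hST]
      exact add_le_add ((Multiset.replicate_le_replicate e₁).mpr (by omega)) hle
    rcases hSmin _ hUle hsum0 with h | h
    · exfalso
      apply hne
      have : T' ≤ (0 : Multiset (ZMod n × ZMod n)) := h ▸ le_add_self
      exact Multiset.le_zero.mp this
    · have hc := congrArg Multiset.card h
      simp [hcard] at hc
      have hle' : Multiset.card T' ≤ n :=
        le_trans (Multiset.card_le_card hle) (le_of_eq hTcard)
      exact Multiset.eq_of_le_of_card_le hle (by omega)
  -- cardinality of the quotient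
  have hQcard : Nat.card ((ZMod n × ZMod n) ⧸ H) = n := by
    have h1 : Nat.card (ZMod n × ZMod n)
        = Nat.card ((ZMod n × ZMod n) ⧸ H) * Nat.card H :=
      AddSubgroup.card_eq_card_quotient_mul_card_addSubgroup H
    have h2 : Nat.card H = n := by rw [hHdef, Nat.card_zmultiples, horde]
    have h3 : Nat.card (ZMod n × ZMod n) = n * n := by
      rw [Nat.card_prod, Nat.card_zmod]
    rw [h2, h3] at h1
    exact (Nat.eq_of_mul_eq_mul_right (by omega) h1.symm)
  -- all elements of T are congruent mod H
  have hcong : ∀ a ∈ T, ∀ b ∈ T,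
      ((a : (ZMod n × ZMod n) ⧸ H) = (b : (ZMod n × ZMod n) ⧸ H)) :=
    all_cong H T n hn hQcard hTcard key
  -- pick e₂ ∈ T
  have hTne : T ≠ 0 := by
    intro h; rw [h] at hTcard; simp at hTcard; omega
  obtain ⟨e₂, he₂T⟩ := Multiset.exists_mem_of_ne_zero hTne
  have hq : ∀ b ∈ T, ((b : (ZMod n × ZMod n) ⧸ H) = (e₂ : (ZMod n × ZMod n) ⧸ H)) :=
    fun b hb => hcong b hb e₂ he₂T
  haveI hQfin : Finite ((ZMod n × ZMod n) ⧸ H) := Nat.finite_of_card_ne_zero (by omega)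
  -- low multiples of e₂ do not vanish in the quotient
  have horder2 : ∀ k, 0 < k → k < n → ¬ (k • ((e₂ : (ZMod n × ZMod n) ⧸ H)) = 0) := by
    intro k hk1 hk2 h0
    set l := T.toList with hldef
    have hlcoe : (l : Multiset (ZMod n × ZMod n)) = T := Multiset.coe_toList T
    have hllen : l.length = n := by rw [hldef, Multiset.length_toList, hTcard]
    set T' : Multiset (ZMod n × ZMod n) := ((l.take k : List (ZMod n × ZMod n)) : Multiset (ZMod n × ZMod n)) with hT'def
    have hT'le : T' ≤ T := by
      rw [← hlcoe]; exact (List.take_sublist k l).subperm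
    have hT'card : Multiset.card T' = k := by
      rw [hT'def]; simp [List.length_take, hllen]; omega
    have hT'ne : T' ≠ 0 := by
      intro h; rw [h] at hT'card; simp at hT'card; omega
    have hmapT' : T'.map ⇑(QuotientAddGroup.mk' H)
        = Multiset.replicate k ((e₂ : (ZMod n × ZMod n) ⧸ H)) := by
      apply Multiset.eq_replicate.mpr
      constructor
      · rw [Multiset.card_map, hT'card]
      · intro q hq'
        obtain ⟨g, hg, rfl⟩ := Multiset.mem_map.mp hq'
        exact hq g (Multiset.mem_of_le hT'le hg)

    have hsumQ : ((T'.sum : ZMod n × ZMod n) : (ZMod n × ZMod n) ⧸ H) = 0 := by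
      have := map_multiset_sum (QuotientAddGroup.mk' H) T'
      rw [hmapT', Multiset.sum_replicate] at this
      rw [show ((T'.sum : ZMod n × ZMod n) : (ZMod n × ZMod n) ⧸ H)
            = (QuotientAddGroup.mk' H) T'.sum from rfl, this]
      exact h0
    have := key T' hT'le hT'ne ((QuotientAddGroup.eq_zero_iff _).mp hsumQ)
    rw [this] at hT'card
    omega
  -- order of e₂ in the quotient is n
  have haddq : addOrderOf ((e₂ : (ZMod n × ZMod n) ⧸ H)) = n := by
    have hnq : n • ((e₂ : (ZMod n × ZMod n) ⧸ H)) = 0 := by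
      have : ((n • e₂ : ZMod n × ZMod n) : (ZMod n × ZMod n) ⧸ H)
          = n • ((e₂ : (ZMod n × ZMod n) ⧸ H)) :=
        AddMonoidHom.map_nsmul (QuotientAddGroup.mk' H) n e₂
      rw [← this, hns e₂]
      rfl
    have hdvd : addOrderOf ((e₂ : (ZMod n × ZMod n) ⧸ H)) ∣ n :=
      addOrderOf_dvd_of_nsmul_eq_zero hnq
    have hpos : 0 < addOrderOf ((e₂ : (ZMod n × ZMod n) ⧸ H)) := addOrderOf_pos _
    by_contra hne
    have hlt : addOrderOf ((e₂ : (ZMod n × ZMod n) ⧸ H)) < n := by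
      have := Nat.le_of_dvd (by omega) hdvd
      omega
    exact horder2 _ hpos hlt (addOrderOf_nsmul_eq_zero _)
  -- basis
  have hsup : AddSubgroup.zmultiples e₁ ⊔ AddSubgroup.zmultiples e₂ = ⊤ := by
    have htop : AddSubgroup.zmultiples ((e₂ : (ZMod n × ZMod n) ⧸ H)) = ⊤ :=
      AddSubgroup.eq_top_of_card_eq _ (by rw [Nat.card_zmultiples, haddq, hQcard])
    rw [eq_top_iff']
    intro g
    have hgmem : ((g : (ZMod n × ZMod n) ⧸ H))
        ∈ AddSubgroup.zmultiples ((e₂ : (ZMod n × ZMod n) ⧸ H)) := by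
      rw [htop]; exact AddSubgroup.mem_top _
    obtain ⟨z, hz2⟩ := AddSubgroup.mem_zmultiples_iff.mp hgmem
    have hz3 : ((z • e₂ : ZMod n × ZMod n) : (ZMod n × ZMod n) ⧸ H)
        = ((g : (ZMod n × ZMod n) ⧸ H)) := by
      rw [show ((z • e₂ : ZMod n × ZMod n) : (ZMod n × ZMod n) ⧸ H)
            = (QuotientAddGroup.mk' H) (z • e₂) from rfl,
        map_zsmul]
      exact hz2
    have hsub : g - z • e₂ ∈ H := (QuotientAddGroup.eq_iff_sub_mem).mp hz3.symm
    have h1 : g - z • e₂ ∈ AddSubgroup.zmultiples e₁ ⊔ AddSubgroup.zmultiples e₂ :=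
      AddSubgroup.mem_sup_left hsub
    have h2 : z • e₂ ∈ AddSubgroup.zmultiples e₁ ⊔ AddSubgroup.zmultiples e₂ :=
      AddSubgroup.mem_sup_right (AddSubgroup.zsmul_mem_zmultiples e₂ z)
    have := AddSubgroup.add_mem _ h1 h2
    rwa [sub_add_cancel] at this
  have hinf : AddSubgroup.zmultiples e₁ ⊓ AddSubgroup.zmultiples e₂ = ⊥ := by
    rw [eq_bot_iff]
    intro g hg
    obtain ⟨hg1, hg2⟩ := AddSubgroup.mem_inf.mp hg
    obtain ⟨z2, hz2⟩ := AddSubgroup.mem_zmultiples_iff.mp hg2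
    have hgq : ((g : (ZMod n × ZMod n) ⧸ H)) = 0 := (QuotientAddGroup.eq_zero_iff _).mpr hg1
    have hzq : z2 • ((e₂ : (ZMod n × ZMod n) ⧸ H)) = 0 := by
      have h4 : (QuotientAddGroup.mk' H) (z2 • e₂)
          = z2 • ((e₂ : (ZMod n × ZMod n) ⧸ H)) := map_zsmul _ _ _
      rw [← h4, hz2]
      exact hgq
    have hdvd : ((n:ℤ)) ∣ z2 := by
      have := addOrderOf_dvd_iff_zsmul_eq_zero.mpr hzq
      rwa [haddq] at this
    obtain ⟨c, rfl⟩ := hdvd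
    have : ((n:ℤ) * c) • e₂ = 0 := by
      rw [mul_comm, mul_zsmul, natCast_zsmul, hns e₂, smul_zero]
    rw [hz2] at this
    exact AddSubgroup.mem_bot.mpr this
  -- coordinates
  have hxex : ∀ t ∈ T, ∃ x : ℕ, x ≤ n - 1 ∧ t = x • e₁ + e₂ := by
    intro t ht
    have hsub : t - e₂ ∈ H := (QuotientAddGroup.eq_iff_sub_mem).mp (hq t ht)
    obtain ⟨z, hz3⟩ := AddSubgroup.mem_zmultiples_iff.mp hsub
    have hnpos : (0:ℤ) < (n:ℤ) := by exact_mod_cast (by omega : 0 < n)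
    refine ⟨(z % (n:ℤ)).toNat, ?_, ?_⟩
    · have := Int.emod_lt_of_pos z hnpos
      have := Int.emod_nonneg z (by omega : (n:ℤ) ≠ 0)
      omega
    · have hk0 : (0:ℤ) ≤ z % (n:ℤ) := Int.emod_nonneg z (by omega)
      have hkz : ((z % (n:ℤ)).toNat : ℤ) = z % (n:ℤ) := Int.toNat_of_nonneg hk0
      have hdvd : (n:ℤ) ∣ (((z % (n:ℤ)).toNat : ℤ) - z) := by
        rw [hkz]
        have := Int.emod_add_mul_ediv z (n:ℤ)
        exact ⟨-(z/(n:ℤ)), by linarith⟩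
      have hzero : (((z % (n:ℤ)).toNat : ℤ) - z) • e₁ = 0 := hz _ hdvd
      have heq : ((z % (n:ℤ)).toNat : ℕ) • e₁ = z • e₁ := by
        have h5 : (((z % (n:ℤ)).toNat : ℤ)) • e₁ = z • e₁ := by
          rw [sub_zsmul] at hzero
          exact sub_eq_zero.mp (by rwa [sub_eq_add_neg])
        rw [← natCast_zsmul]
        exact h5
      rw [heq, hz3]
      abel
  -- enumerate T by Fin n
  set l := T.toList with hldef
  have hlcoe : (l : Multiset (ZMod n × ZMod n)) = T := Multiset.coe_toList T
  have hllen : l.length = n := by rw [hldef, Multiset.length_toList, hTcard]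
  set f : Fin n → ZMod n × ZMod n := fun i => l.get (Fin.cast hllen.symm i) with hfdef
  have hfmem : ∀ i, f i ∈ T := by
    intro i
    rw [← hlcoe]
    apply Multiset.mem_coe.mpr
    simp only [hfdef, List.get_eq_getElem]
    exact List.getElem_mem _
  choose x hx1 hx2 using fun i : Fin n => hxex (f i) (hfmem i)
  have hofn : List.ofFn f = l := by
    apply List.ext_getElem
    · simp [hllen]
    · intro i h1 h2
      simp [List.getElem_ofFn, hfdef]
  have hmapf : Multiset.map f (Finset.univ : Finset (Fin n)).val = T := by
    rw [Fin.univ_val_map, hofn, hlcoe]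
  have hmapx : Multiset.map (fun i => x i • e₁ + e₂) (Finset.univ : Finset (Fin n)).val = T := by
    rw [← hmapf]
    apply Multiset.map_congr rfl
    intro i _
    exact (hx2 i).symm
  -- the sum condition
  have hsumx : (∑ i, x i) % n = 1 % n := by
    have h1 : ∑ i : Fin n, (x i • e₁ + e₂) = T.sum := by
      rw [← hmapx]
      rfl
    have h2 : ∑ i : Fin n, (x i • e₁ + e₂) = (∑ i, x i) • e₁ + n • e₂ := by
      rw [Finset.sum_add_distrib, Finset.sum_const, Finset.card_univ, Fintype.card_fin]
      congr 1
      rw [Finset.sum_smul]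
    have h3 : (∑ i, x i) • e₁ = e₁ := by
      have h1' := h1
      rw [h2, hns e₂, add_zero, hTsum] at h1'
      exact h1'
    have hdvd2 : (n:ℤ) ∣ ((∑ i, x i : ℕ) : ℤ) - 1 := by
      have h6 : (((∑ i, x i : ℕ) : ℤ) - 1) • e₁ = 0 := by
        rw [sub_zsmul, natCast_zsmul, one_zsmul, h3]
        simp
      have := addOrderOf_dvd_iff_zsmul_eq_zero.mpr h6
      rw [horde] at this
      exact_mod_cast this
    have h7 : (1 : ℕ) ≡ (∑ i, x i) [MOD n] :=
      (Nat.modEq_iff_dvd).mpr (by exact_mod_cast hdvd2)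
    exact h7.symm
  exact ⟨e₂, x, ⟨hsup, hinf⟩, hx1, hsumx, by rw [hST, hmapx]⟩
end

section
/- Let n ≥ 2, let G = (ℤ/nℤ)², and let S be a sequence over G with 0 ∉ Σ_{≤ n−1}(S). If g, h ∈ supp(S) with the multiplicity of g in S at least n − 2 and h ∈ ⟨g⟩, then h = g. -/
theorem stmt_18 (n : ℕ) (hn : 2 ≤ n)
    (S : Multiset (ZMod n × ZMod n))
    (h0 : (0 : ZMod n × ZMod n) ∉ SigmaLe (n - 1) S)
    (g h : ZMod n × ZMod n) (hg : g ∈ S) (hh : h ∈ S)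
    (hcount : n - 2 ≤ S.count g) (hmem : h ∈ AddSubgroup.zmultiples g) :
    h = g := by
  by_contra hne
  have hnsmul : n • g = 0 := by
    ext <;> simp [nsmul_eq_mul, ZMod.natCast_self]
  obtain ⟨c, hc0⟩ := hmem
  have hc : c • g = h := hc0
  have hnpos : (0:ℤ) < (n:ℤ) := by exact_mod_cast Nat.lt_of_lt_of_le (by norm_num) hn
  have hmod0 : 0 ≤ c % (n:ℤ) := Int.emod_nonneg c (by omega)
  have hmodlt : c % (n:ℤ) < (n:ℤ) := Int.emod_lt_of_pos c hnpos
  set m : ℕ := (c % (n:ℤ)).toNat with hmdef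
  have hmlt : m < n := by omega
  have hmcast : (m : ℤ) = c % (n:ℤ) := Int.toNat_of_nonneg hmod0
  have hzng : (n:ℤ) • g = 0 := by rw [natCast_zsmul]; exact hnsmul
  have hmg : m • g = h := by
    rw [← hc, ← natCast_zsmul, hmcast]
    conv_rhs => rw [← Int.emod_add_mul_ediv c (n:ℤ)]
    rw [add_zsmul, mul_comm, mul_zsmul, hzng, smul_zero, add_zero]
  -- m = 0 is impossible since then h = 0
  have hm0 : m ≠ 0 := by
    intro h0'
    apply h0
    exact ⟨{h}, Multiset.singleton_le.mpr hh, by simp, by simp; omega,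
      by simp [← hmg, h0']⟩
  -- m = 1 is impossible since then h = g
  have hm1 : m ≠ 1 := by
    intro h1'
    apply hne
    rw [← hmg, h1', one_smul]
  -- so 2 ≤ m < n; build the zero-sum subsequence h + (n - m) copies of g
  apply h0
  refine ⟨h ::ₘ Multiset.replicate (n - m) g, ?_, by simp, ?_, ?_⟩
  · rw [Multiset.le_iff_count]
    intro a
    by_cases hag : a = g
    · subst hag
      rw [Multiset.count_cons_of_ne (Ne.symm hne), Multiset.count_replicate_self]
      omega
    · by_cases hah : a = h
      · subst hah
        rw [Multiset.count_cons_self, Multiset.count_replicate, if_neg (fun e => hag e.symm)]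
        exact Multiset.count_pos.mpr hh
      · rw [Multiset.count_cons_of_ne hah, Multiset.count_replicate, if_neg (fun e => hag e.symm)]
        omega
  · simp; omega
  · rw [Multiset.sum_cons, Multiset.sum_replicate, ← hmg, ← add_nsmul]
    have : m + (n - m) = n := by omega
    rw [this, hnsmul]
end

section
/- Let n ≥ 2, let G = (ℤ/nℤ)², and let S = e₁^[n−1] · e₂^[n−1] · e₃^[n−1] be a sequence over G with 0 ∉ Σ_{≤ n}(S), where e₁, e₂, e₃ ∈ G. Then each of e₁, e₂, e₃ has order n, and each of the pairs (e₁,e₂), (e₁,e₃), and (e₂,e₃) is a basis of G. -/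
lemma exp_n (n : ℕ) (x : ZMod n × ZMod n) : n • x = 0 := by
  ext
  · show n • x.1 = 0
    simp [nsmul_eq_mul, ZMod.natCast_self]
  · show n • x.2 = 0
    simp [nsmul_eq_mul, ZMod.natCast_self]

lemma key {n : ℕ} (hn : 2 ≤ n) (e f : ZMod n × ZMod n)
    (H : ∀ a b : ℕ, a ≤ n - 1 → b ≤ n - 1 → 1 ≤ a + b → a + b ≤ n →
      a • e + b • f ≠ 0) :
    addOrderOf e = n ∧ addOrderOf f = n ∧ IsBasis e f := by
  have horder : ∀ g : ZMod n × ZMod n,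
      (∀ a : ℕ, 1 ≤ a → a ≤ n - 1 → a • g ≠ 0) → addOrderOf g = n := by
    intro g hg
    have hdvd : addOrderOf g ∣ n := addOrderOf_dvd_of_nsmul_eq_zero (exp_n n g)
    have hle : addOrderOf g ≤ n := Nat.le_of_dvd (by omega) hdvd
    have hpos : 0 < addOrderOf g := by
      rcases Nat.eq_zero_or_pos (addOrderOf g) with h | h
      · rw [h] at hdvd; omega
      · exact h
    by_contra hne
    exact hg (addOrderOf g) hpos (by omega) (addOrderOf_nsmul_eq_zero g)
  have he : addOrderOf e = n := by
    refine horder e fun a h1 h2 h3 => ?_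
    exact H a 0 h2 (by omega) (by omega) (by omega) (by simpa using h3)
  have hf : addOrderOf f = n := by
    refine horder f fun a h1 h2 h3 => ?_
    exact H 0 a (by omega) h2 (by omega) (by omega) (by simpa using h3)
  -- reduction of integer multiples to natural multiples < n
  have hred : ∀ (g : ZMod n × ZMod n) (k : ℤ), ∃ a : ℕ, a < n ∧ (a : ℤ) • g = k • g := by
    intro g k
    refine ⟨(k % n).toNat, ?_, ?_⟩
    · have h1 : (0:ℤ) < n := by omega
      have := Int.emod_lt_of_pos k h1
      omega
    · have h1 : (0:ℤ) < n := by omega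
      have h2 : (0:ℤ) ≤ k % n := Int.emod_nonneg k (by omega)
      rw [Int.toNat_of_nonneg h2]
      have hk : k = n * (k / n) + k % n := (Int.mul_ediv_add_emod k n).symm
      have hzero : (n : ℤ) • g = 0 := by
        rw [natCast_zsmul]; exact exp_n n g
      have hmul : ((k / n) * (n : ℤ)) • g = 0 := by rw [mul_zsmul, hzero, smul_zero]
      conv_rhs => rw [hk, mul_comm]
      rw [add_zsmul, hmul, zero_add]
  have hinf : AddSubgroup.zmultiples e ⊓ AddSubgroup.zmultiples f = ⊥ := by
    rw [eq_bot_iff]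
    intro x hx
    rw [AddSubgroup.mem_inf] at hx
    obtain ⟨hx1, hx2⟩ := hx
    rw [AddSubgroup.mem_zmultiples_iff] at hx1 hx2
    obtain ⟨k, hk⟩ := hx1
    obtain ⟨m, hm⟩ := hx2
    obtain ⟨a, ha, hae⟩ := hred e k
    obtain ⟨b, hb, hbf⟩ := hred f m
    rw [AddSubgroup.mem_bot]
    by_contra hx0
    have hxe : a • e = x := by rw [← natCast_zsmul, hae, hk]
    have hxf : b • f = x := by rw [← natCast_zsmul, hbf, hm]
    have ha1 : 1 ≤ a := by
      rcases Nat.eq_zero_or_pos a with h | h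
      · exact absurd (by simpa [h] using hxe.symm) hx0
      · exact h
    have hb1 : 1 ≤ b := by
      rcases Nat.eq_zero_or_pos b with h | h
      · exact absurd (by simpa [h] using hxf.symm) hx0
      · exact h
    have hnb : (n - b) • f = -x := by
      have : (n - b) • f + b • f = n • f := by rw [← add_nsmul]; congr 1; omega
      rw [exp_n n f, hxf] at this
      linear_combination (norm := abel) this
    rcases le_or_gt a b with hab | hab
    · exact H a (n - b) (by omega) (by omega) (by omega) (by omega)
        (by rw [hxe, hnb, add_neg_cancel])
    · have hna : (n - a) • e = -x := by
        have : (n - a) • e + a • e = n • e := by rw [← add_nsmul]; congr 1; omega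
        rw [exp_n n e, hxe] at this
        linear_combination (norm := abel) this
      exact H (n - a) b (by omega) (by omega) (by omega) (by omega)
        (by rw [hna, hxf, neg_add_cancel])
  refine ⟨he, hf, ?_, hinf⟩
  -- sup = ⊤ via cardinality
  haveI : NeZero n := ⟨by omega⟩
  set H := AddSubgroup.zmultiples e with hH
  set K := AddSubgroup.zmultiples f with hK
  have hinj : Function.Injective (fun p : H × K => (p.1 : ZMod n × ZMod n) + p.2) := by
    rintro ⟨⟨h₁, hh₁⟩, ⟨k₁, hk₁⟩⟩ ⟨⟨h₂, hh₂⟩, ⟨k₂, hk₂⟩⟩ heq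
    simp only [Subtype.coe_mk] at heq
    have h12 : h₁ - h₂ = k₂ - k₁ := by linear_combination heq
    have hmem : h₁ - h₂ ∈ H ⊓ K := by
      rw [AddSubgroup.mem_inf]
      exact ⟨AddSubgroup.sub_mem H hh₁ hh₂, h12 ▸ AddSubgroup.sub_mem K hk₂ hk₁⟩
    rw [hinf, AddSubgroup.mem_bot, sub_eq_zero] at hmem
    have hk : k₁ = k₂ := by
      have : h₁ + k₁ = h₁ + k₂ := by rw [heq, hmem]
      exact add_left_cancel this
    simp [Prod.ext_iff, Subtype.ext_iff, hmem, hk]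
  have hcard : Nat.card (H × K) = Nat.card (ZMod n × ZMod n) := by
    rw [Nat.card_prod, hH, hK, Nat.card_zmultiples, Nat.card_zmultiples, he, hf,
      Nat.card_prod, Nat.card_zmod]
  have hsurj := ((Nat.bijective_iff_injective_and_card _).mpr ⟨hinj, hcard⟩).surjective
  rw [AddSubgroup.eq_top_iff']
  intro g
  obtain ⟨⟨h, k⟩, hgk⟩ := hsurj g
  rw [← hgk]
  exact AddSubgroup.add_mem _ (AddSubgroup.mem_sup_left h.2) (AddSubgroup.mem_sup_right k.2)

theorem stmt_19 (n : ℕ) (hn : 2 ≤ n) (e₁ e₂ e₃ : ZMod n × ZMod n)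
    (S : Multiset (ZMod n × ZMod n))
    (hS : S = Multiset.replicate (n - 1) e₁ + Multiset.replicate (n - 1) e₂ +
        Multiset.replicate (n - 1) e₃)
    (h0 : (0 : ZMod n × ZMod n) ∉ SigmaLe n S) :
    (addOrderOf e₁ = n ∧ addOrderOf e₂ = n ∧ addOrderOf e₃ = n) ∧
      IsBasis e₁ e₂ ∧ IsBasis e₁ e₃ ∧ IsBasis e₂ e₃ := by
  subst hS
  have hgen : ∀ (e f : ZMod n × ZMod n),
      (∀ a b : ℕ, a ≤ n - 1 → b ≤ n - 1 →
        Multiset.replicate a e + Multiset.replicate b f ≤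
          Multiset.replicate (n - 1) e₁ + Multiset.replicate (n - 1) e₂ +
          Multiset.replicate (n - 1) e₃) →
      (∀ a b : ℕ, a ≤ n - 1 → b ≤ n - 1 → 1 ≤ a + b → a + b ≤ n →
        a • e + b • f ≠ 0) := by
    intro e f hle a b ha hb h1 h2 hsum
    apply h0
    refine ⟨Multiset.replicate a e + Multiset.replicate b f, hle a b ha hb, ?_, ?_, ?_⟩
    · intro h
      have := congrArg Multiset.card h
      simp at this
      omega
    · simp; omega
    · rw [Multiset.sum_add, Multiset.sum_replicate, Multiset.sum_replicate]; exact hsum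
  have h12 := hgen e₁ e₂ fun a b ha hb => by
    refine le_trans (add_le_add ((Multiset.replicate_le_replicate e₁).2 ha)
      ((Multiset.replicate_le_replicate e₂).2 hb)) ?_
    exact Multiset.le_add_right _ _
  have h13 := hgen e₁ e₃ fun a b ha hb => by
    have : Multiset.replicate a e₁ + Multiset.replicate b e₃ ≤
        Multiset.replicate (n-1) e₁ + Multiset.replicate (n-1) e₃ :=
      add_le_add ((Multiset.replicate_le_replicate e₁).2 ha)
        ((Multiset.replicate_le_replicate e₃).2 hb)
    refine le_trans this ?_
    rw [add_right_comm]
    exact Multiset.le_add_right _ _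
  have h23 := hgen e₂ e₃ fun a b ha hb => by
    have : Multiset.replicate a e₂ + Multiset.replicate b e₃ ≤
        Multiset.replicate (n-1) e₂ + Multiset.replicate (n-1) e₃ :=
      add_le_add ((Multiset.replicate_le_replicate e₂).2 ha)
        ((Multiset.replicate_le_replicate e₃).2 hb)
    refine le_trans this ?_
    rw [add_assoc]
    exact Multiset.le_add_left _ _
  obtain ⟨he1, he2, hb12⟩ := key hn e₁ e₂ h12
  obtain ⟨_, he3, hb13⟩ := key hn e₁ e₃ h13
  obtain ⟨_, _, hb23⟩ := key hn e₂ e₃ h23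
  exact ⟨⟨he1, he2, he3⟩, hb12, hb13, hb23⟩
end
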